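/- arXiv:2406.12989 — 4 statements merged into one kernel-verified Lean document; each statement's English description precedes it below -/
import Mathlib

section
/- Let d ≥ 1 be an integer and let T be the complete binary tree (q = 2) of depth d. Then (d − log₂(d) − 3 − log₂(3))/2 ≤ Φ_V(T) ≤ ⌈d/2⌉. -/
open scoped Classical

/-- A vertex of the complete `q`-ary tree of depth `d`: a sequence over `Fin q`
of length at most `d`. -/
def QV (q d : ℕ) : Type := {l : List (Fin q) // l.length ≤ d}

instance (q d : ℕ) : Finite (QV q d) :=
  (List.finite_length_le (Fin q) d).to_subtype

/-- The complete `q`-ary tree of depth `d`: two vertices are adjacent exactly when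
one is obtained from the other by appending a single element. -/
def qTree (q d : ℕ) : SimpleGraph (QV q d) where
  Adj u v := (∃ a : Fin q, v.val = u.val ++ [a]) ∨ (∃ a : Fin q, u.val = v.val ++ [a])
  symm := by constructor; intro u v h; tauto
  loopless := by
    constructor
    rintro u (⟨a, ha⟩ | ⟨a, ha⟩) <;>
    · have := congrArg List.length ha
      simp at this

/-- The vertex border `δ(S)`: vertices outside `S` with a neighbour in `S`. -/
def vertexBorder {V : Type*} (G : SimpleGraph V) (S : Set V) : Set V :=
  {v | v ∉ S ∧ ∃ u ∈ S, G.Adj u v}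

/-- `Φ_V(G, s)`: the minimum border size over vertex sets of size `s`. -/
noncomputable def isoProfile {V : Type*} (G : SimpleGraph V) (s : ℕ) : ℕ :=
  sInf ((fun S => (vertexBorder G S).ncard) '' {S : Set V | S.ncard = s})

/-- `Φ_V(G)`: the vertex-isoperimetric peak, `max_{0 ≤ s ≤ |V|} Φ_V(G, s)`. -/
noncomputable def isoPeak {V : Type*} (G : SimpleGraph V) : ℕ :=
  sSup (isoProfile G '' Set.Icc 0 (Nat.card V))

/-- The vertex separation number: for each linear layout (a bijection from the
vertices to `{1, …, |V|}`, here modelled as `V ≃ Fin |V|`) take the maximum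
border size of its prefix sets, then minimize over layouts. -/
noncomputable def vsNum {V : Type*} (G : SimpleGraph V) : ℕ :=
  sInf {n | ∃ L : V ≃ Fin (Nat.card V),
    n = sSup {m | ∃ i : Fin (Nat.card V),
      m = (vertexBorder G {u | (L u : ℕ) ≤ (i : ℕ)}).ncard}}

namespace QV

variable {q d : ℕ}

/-- Level `i`: vertices at distance `i` from the root. -/
def level (q d : ℕ) (i : ℕ) : Set (QV q d) := {w | w.val.length = i}

/-- Descendants of `u` (including `u` itself). -/
def desc (u : QV q d) : Set (QV q d) := {w | u.val <+: w.val}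

/-- `w` is a child of `u`. -/
def IsChildOf (w u : QV q d) : Prop := ∃ a : Fin q, w.val = u.val ++ [a]

/-- `u` is to the left of `v`: same level and lexicographically smaller. -/
def LeftOf (u v : QV q d) : Prop :=
  u.val.length = v.val.length ∧ List.Lex (· < ·) u.val v.val

/-- `u` precedes `v` in the breadth-first ordering of the tree. -/
def Precedes (u v : QV q d) : Prop :=
  u.val.length < v.val.length ∨
    (u.val.length = v.val.length ∧ List.Lex (· < ·) u.val v.val)

/-- `u, v` are swappable in `S`. -/
def Swappable (S : Set (QV q d)) (u v : QV q d) : Prop :=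
  LeftOf u v ∧ ((u ∉ S ∧ v ∈ S) ∨
    (u ∉ S ∧ v ∉ S ∧ (∀ w, IsChildOf w u → w ∉ S) ∧ (∃ w, IsChildOf w v ∧ w ∈ S)))

/-- Level `i` of `S` is left-ordered: no swappable pair in level `i`. -/
def LevelLeftOrdered (S : Set (QV q d)) (i : ℕ) : Prop :=
  ∀ u v : QV q d, u.val.length = i → ¬ Swappable S u v

/-- `S` is left-ordered: every level is left-ordered. -/
def LeftOrdered (S : Set (QV q d)) : Prop := ∀ i, LevelLeftOrdered S i

/-- The canonical map used in a treeswap between `u` and `v`: a descendant of `u`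
is sent to the corresponding descendant of `v` (same suffix), and vice versa;
other vertices are fixed. -/
noncomputable def swapAt (u v w : QV q d) : QV q d :=
  if h : u.val <+: w.val ∧ (v.val ++ w.val.drop u.val.length).length ≤ d then
    ⟨v.val ++ w.val.drop u.val.length, h.2⟩
  else if h' : v.val <+: w.val ∧ (u.val ++ w.val.drop v.val.length).length ≤ d then
    ⟨u.val ++ w.val.drop v.val.length, h'.2⟩
  else w

/-- The treeswap of `S` between `u` and `v`. -/
noncomputable def treeswap (S : Set (QV q d)) (u v : QV q d) : Set (QV q d) :=
  {w | swapAt u v w ∈ S}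

/-- The strict partial order `A < B` on subsets of the tree. -/
def SetPrec (A B : Set (QV q d)) : Prop :=
  (∀ i, (A ∩ level q d i).ncard = (B ∩ level q d i).ncard) ∧
  ∃ v, v ∈ A ∧ v ∉ B ∧ ∀ w, Precedes w v → (w ∈ A ↔ w ∈ B)

/-- `S` is down-compressed. -/
def DownCompressed (S : Set (QV q d)) : Prop :=
  ∀ u ∈ S, ∀ v ∉ S,
    (vertexBorder (qTree q d) S).ncard ≤
      (vertexBorder (qTree q d) ((S ∪ {v}) \ {u})).ncard ∧
    (u.val.length < v.val.length →
      (vertexBorder (qTree q d) S).ncard <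
        (vertexBorder (qTree q d) ((S ∪ {v}) \ {u})).ncard)

/-- `S'` is an aeolian compression of `S`. -/
def IsAeolianCompression (S S' : Set (QV q d)) : Prop :=
  ∃ u v : QV q d, LeftOf u v ∧
    ∃ R A : Set (QV q d), R.Nonempty ∧ R ⊆ S ∧ R ⊆ desc v ∧
      A ⊆ desc u ∧ Disjoint A S ∧ A.ncard = R.ncard ∧
      S' = (S \ R) ∪ A ∧
      S'.ncard = S.ncard ∧
      (vertexBorder (qTree q d) S').ncard ≤ (vertexBorder (qTree q d) S).ncard

/-- `S` is aeolian-compressed. -/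
def AeolianCompressed (S : Set (QV q d)) : Prop :=
  LeftOrdered S ∧ DownCompressed S ∧ ∀ S', ¬ IsAeolianCompression S S'

end QV

/-- minimal signed-binary weight (recursive lower-bound version) -/
def phi (n : ℕ) : ℕ :=
  if n ≤ 1 then n
  else if n % 2 = 0 then phi (n / 2)
  else 1 + min (phi (n / 2)) (phi (n / 2 + 1))
termination_by n
decreasing_by all_goals omega

lemma phi_zero : phi 0 = 0 := by simp [phi]
lemma phi_one : phi 1 = 1 := by simp [phi]

lemma phi_two_mul (n : ℕ) : phi (2 * n) = phi n := by
  rcases Nat.eq_zero_or_pos n with h | h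
  · simp [h]
  · rw [phi]
    have h1 : ¬ (2 * n ≤ 1) := by omega
    have h2 : 2 * n % 2 = 0 := by omega
    simp [h1, h2, Nat.mul_div_cancel_left n (by norm_num : 0 < 2)]

lemma phi_odd (t : ℕ) : phi (2 * t + 1) = 1 + min (phi t) (phi (t + 1)) := by
  rcases Nat.eq_zero_or_pos t with h | h
  · simp [h, phi]
  · rw [phi]
    have h1 : ¬ (2 * t + 1 ≤ 1) := by omega
    have h2 : ¬ ((2 * t + 1) % 2 = 0) := by omega
    have h3 : (2 * t + 1) / 2 = t := by omega
    simp [h1, h2, h3]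

lemma phi_pow (j : ℕ) : phi (2 ^ j) = 1 := by
  induction j with
  | zero => simp [phi]
  | succ n ih => rw [pow_succ, mul_comm, phi_two_mul]; exact ih

/-- signed weight of an integer -/
def phiz (z : ℤ) : ℕ := phi z.natAbs

lemma phiz_zero : phiz 0 = 0 := phi_zero
lemma phiz_neg (z : ℤ) : phiz (-z) = phiz z := by simp [phiz]
lemma phiz_two_mul (z : ℤ) : phiz (2 * z) = phiz z := by
  unfold phiz
  rw [Int.natAbs_mul]
  exact phi_two_mul z.natAbs

lemma phiz_odd (t : ℤ) : phiz (2 * t + 1) = 1 + min (phiz t) (phiz (t + 1)) := by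
  unfold phiz
  rcases le_or_gt 0 t with h | h
  · have : (2 * t + 1).natAbs = 2 * t.natAbs + 1 := by omega
    rw [this, phi_odd]
    have e1 : t.natAbs = (t).toNat := by omega
    have e2 : (t+1).natAbs = t.natAbs + 1 := by omega
    rw [e2]
  · have h1 : (2 * t + 1).natAbs = 2 * (t + 1).natAbs + 1 := by omega
    rw [h1, phi_odd]
    have h2 : (t+1).natAbs + 1 = t.natAbs := by omega
    rw [h2, min_comm]

lemma phiz_le_odd_left (t : ℤ) : phiz (2 * t + 1) ≤ 1 + phiz t := by
  rw [phiz_odd]; simp [min_le_left]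
lemma phiz_le_odd_right (t : ℤ) : phiz (2 * t + 1) ≤ 1 + phiz (t + 1) := by
  rw [phiz_odd]; simp [min_le_right]

lemma phiz_one : phiz 1 = 1 := phi_one
lemma phiz_abs_one {z : ℤ} (h : z.natAbs ≤ 1) : phiz z ≤ 1 := by
  interval_cases h' : z.natAbs <;> simp [phiz, h', phi_zero, phi_one]

/-- adding or subtracting 1 changes phiz by at most 1 -/
lemma phiz_step_aux : ∀ (n : ℕ) (z : ℤ), z.natAbs = n → phiz (z + 1) ≤ phiz z + 1 ∧ phiz (z - 1) ≤ phiz z + 1 := by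
  intro n
  induction n using Nat.strong_induction_on with
  | _ n IH =>
  intro z hn
  subst hn
  rcases Int.even_or_odd z with ⟨t, ht⟩ | ⟨t, ht⟩
  · -- z = 2t
    subst ht
    constructor
    · have : t + t + 1 = 2 * t + 1 := by ring
      rw [this, phiz_odd]
      have : phiz (t + t) = phiz t := by rw [show t + t = 2 * t by ring, phiz_two_mul]
      omega
    · have : t + t - 1 = 2 * (t - 1) + 1 := by ring
      rw [this, phiz_odd]
      have h2 : t - 1 + 1 = t := by ring
      rw [h2]
      have : phiz (t + t) = phiz t := by rw [show t + t = 2 * t by ring, phiz_two_mul]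
      omega
  · -- z = 2t+1
    subst ht
    by_cases hz : (2 * t + 1).natAbs ≤ 1
    · constructor
      · have h1 : 2 * t + 1 + 1 = 2 * (t + 1) := by ring
        rw [h1, phiz_two_mul]
        have : (t+1).natAbs ≤ 1 := by omega
        have := phiz_abs_one this
        omega
      · have h1 : 2 * t + 1 - 1 = 2 * t := by ring
        rw [h1, phiz_two_mul]
        have : t.natAbs ≤ 1 := by omega
        have := phiz_abs_one this
        omega
    · -- |2t+1| ≥ 3 hence |t| ≥ 1 and |t|, |t+1| < |2t+1|
      have ht1 : t.natAbs < (2*t+1).natAbs := by omega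
      have ht2 : (t+1).natAbs < (2*t+1).natAbs := by omega
      have IHt := IH t.natAbs ht1 t rfl
      have IHt1 := IH (t+1).natAbs ht2 (t+1) rfl
      rw [phiz_odd]
      constructor
      · have h1 : 2 * t + 1 + 1 = 2 * (t + 1) := by ring
        rw [h1, phiz_two_mul]
        -- phiz (t+1) ≤ min (phiz t) (phiz (t+1)) + 1 : since phiz (t+1) ≤ phiz t + 1
        have := IHt.1
        omega
      · have h1 : 2 * t + 1 - 1 = 2 * t := by ring
        rw [h1, phiz_two_mul]
        have h2 : t + 1 - 1 = t := by ring
        have := IHt1.2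
        rw [h2] at this
        omega

lemma phiz_step (z : ℤ) : phiz (z + 1) ≤ phiz z + 1 ∧ phiz (z - 1) ≤ phiz z + 1 :=
  phiz_step_aux z.natAbs z rfl

/-- adding or subtracting a power of 2 changes phiz by at most 1 -/
lemma phiz_add_pow : ∀ (e : ℕ) (z : ℤ), phiz (z + 2^e) ≤ phiz z + 1 ∧ phiz (z - 2^e) ≤ phiz z + 1 := by
  intro e
  induction e with
  | zero => intro z; simpa using phiz_step z
  | succ e IH =>
    intro z
    rcases Int.even_or_odd z with ⟨t, ht⟩ | ⟨t, ht⟩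
    · subst ht
      constructor
      · have h1 : t + t + 2^(e+1) = 2 * (t + 2^e) := by ring
        rw [h1, phiz_two_mul, show t + t = 2*t by ring, phiz_two_mul]
        exact (IH t).1
      · have h1 : t + t - 2^(e+1) = 2 * (t - 2^e) := by ring
        rw [h1, phiz_two_mul, show t + t = 2*t by ring, phiz_two_mul]
        exact (IH t).2
    · subst ht
      constructor
      · have h1 : 2 * t + 1 + 2^(e+1) = 2 * (t + 2^e) + 1 := by ring
        rw [h1, phiz_odd, phiz_odd]
        have a1 := (IH t).1
        have a2 := (IH (t+1)).1
        have h2 : t + 2^e + 1 = (t+1) + 2^e := by ring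
        rw [h2]
        omega
      · have h1 : 2 * t + 1 - 2^(e+1) = 2 * (t - 2^e) + 1 := by ring
        rw [h1, phiz_odd, phiz_odd]
        have a1 := (IH t).2
        have a2 := (IH (t+1)).2
        have h2 : t - 2^e + 1 = (t+1) - 2^e := by ring
        rw [h2]
        omega

lemma phiz_succ_le (t : ℤ) : phiz (t + 1) ≤ phiz t + 1 := (phiz_step t).1
lemma phiz_le_succ (t : ℤ) : phiz t ≤ phiz (t + 1) + 1 := by
  have := (phiz_step (t+1)).2; simpa using this

/-- subadditivity of phiz -/
lemma phiz_add_le_aux : ∀ (n : ℕ) (x y : ℤ), x.natAbs + y.natAbs = n →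
    phiz (x + y) ≤ phiz x + phiz y := by
  intro n
  induction n using Nat.strong_induction_on with
  | _ n IH =>
  intro x y hn
  by_cases hx : x.natAbs ≤ 1
  · interval_cases h : x.natAbs
    · have : x = 0 := by omega
      simp [this]
    · have : x = 1 ∨ x = -1 := by omega
      rcases this with h1 | h1 <;> subst h1
      · have := phiz_succ_le y
        have e : (1 : ℤ) + y = y + 1 := by ring
        rw [e]
        rw [phiz_one]; omega
      · have := (phiz_step y).2
        have e : (-1 : ℤ) + y = y - 1 := by ring
        rw [e]
        have e2 : phiz (-1) = 1 := by rw [show ((-1:ℤ)) = -(1:ℤ) by ring, phiz_neg, phiz_one]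
        rw [e2]
        omega
  by_cases hy : y.natAbs ≤ 1
  · interval_cases h : y.natAbs
    · have : y = 0 := by omega
      simp [this]
    · have : y = 1 ∨ y = -1 := by omega
      rcases this with h1 | h1 <;> subst h1
      · have := phiz_succ_le x
        have e2 : phiz (1:ℤ) = 1 := phiz_one
        omega
      · have := (phiz_step x).2
        have e2 : phiz (-1:ℤ) = 1 := by rw [show ((-1:ℤ)) = -(1:ℤ) by ring, phiz_neg, phiz_one]
        have e : x + -1 = x - 1 := by ring
        rw [e]
        omega
  -- both |x|,|y| ≥ 2
  rcases Int.even_or_odd x with ⟨a, hx2⟩ | ⟨a, hx2⟩ <;>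
    rcases Int.even_or_odd y with ⟨b, hy2⟩ | ⟨b, hy2⟩ <;> subst hx2 <;> subst hy2
  · -- even, even
    have e1 : a + a + (b + b) = 2 * (a + b) := by ring
    rw [e1, phiz_two_mul, show a + a = 2*a by ring, phiz_two_mul,
        show b + b = 2*b by ring, phiz_two_mul]
    exact IH _ (by omega) a b rfl
  · -- even, odd
    have e1 : a + a + (2 * b + 1) = 2 * (a + b) + 1 := by ring
    rw [e1, phiz_odd, phiz_odd, show a + a = 2*a by ring, phiz_two_mul]
    have i1 : phiz (a + b) ≤ phiz a + phiz b := IH _ (by omega) a b rfl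
    have i2 : phiz (a + b + 1) ≤ phiz a + phiz (b+1) := by
      have := IH _ (show a.natAbs + (b+1).natAbs < n by omega) a (b+1) rfl
      simpa [add_assoc] using this
    omega
  · -- odd, even
    have e1 : 2 * a + 1 + (b + b) = 2 * (a + b) + 1 := by ring
    rw [e1, phiz_odd, phiz_odd, show b + b = 2*b by ring, phiz_two_mul]
    have i1 : phiz (a + b) ≤ phiz a + phiz b := IH _ (by omega) a b rfl
    have i2 : phiz (a + b + 1) ≤ phiz (a+1) + phiz b := by
      have := IH _ (show (a+1).natAbs + b.natAbs < n by omega) (a+1) b rfl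
      have e : a + 1 + b = a + b + 1 := by ring
      rwa [e] at this
    omega
  · -- odd, odd
    have e1 : 2 * a + 1 + (2 * b + 1) = 2 * (a + b + 1) := by ring
    rw [e1, phiz_two_mul, phiz_odd, phiz_odd]
    have i1 : phiz (a + b + 1) ≤ phiz a + phiz (b+1) := by
      have := IH _ (show a.natAbs + (b+1).natAbs < n by omega) a (b+1) rfl
      simpa [add_assoc] using this
    have i2 : phiz (a + b + 1) ≤ phiz (a+1) + phiz b := by
      have := IH _ (show (a+1).natAbs + b.natAbs < n by omega) (a+1) b rfl
      have e : a + 1 + b = a + b + 1 := by ring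
      rwa [e] at this
    have s1 := phiz_succ_le a
    have s2 := phiz_succ_le b
    have s3 := phiz_le_succ a
    have s4 := phiz_le_succ b
    omega

lemma phiz_add_le (x y : ℤ) : phiz (x + y) ≤ phiz x + phiz y :=
  phiz_add_le_aux _ x y rfl

lemma phiz_sub_le (x y : ℤ) : phiz x ≤ phiz (x - y) + phiz y := by
  have := phiz_add_le (x - y) y
  simpa using this

/-- the alternating-binary numbers a_m = (4^m-1)/3 -/
def aseq : ℕ → ℕ
  | 0 => 0
  | m + 1 => 4 * aseq m + 1

lemma aseq_phi : ∀ m : ℕ, m ≤ phi (aseq m) ∧ m + 1 ≤ phi (2 * aseq m + 1) := by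
  intro m
  induction m with
  | zero => simp [aseq, phi_zero, phi_one]
  | succ m IH =>
    have h1 : aseq (m+1) = 2 * (2 * aseq m) + 1 := by simp [aseq]; ring
    have h2 : phi (aseq (m+1)) = 1 + min (phi (aseq m)) (phi (2 * aseq m + 1)) := by
      rw [h1, phi_odd, phi_two_mul]
    have ha : m + 1 ≤ phi (aseq (m+1)) := by omega
    constructor
    · exact ha
    · have h3 : phi (2 * aseq (m+1) + 1)
          = 1 + min (phi (aseq (m+1))) (phi (aseq (m+1) + 1)) := phi_odd _
      have h4 : aseq (m+1) + 1 = 2 * (2 * aseq m + 1) := by simp [aseq]; ring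
      rw [h4, phi_two_mul] at h3
      omega

lemma aseq_3 : ∀ m, 3 * aseq m + 1 = 4 ^ m := by
  intro m
  induction m with
  | zero => simp [aseq]
  | succ m IH => simp [aseq, pow_succ]; omega

/-- log upper bound on phi -/
lemma phi_le_log : ∀ n : ℕ, 1 ≤ n → 2 * phi n ≤ Nat.log 2 n + 3 := by
  intro n
  induction n using Nat.strong_induction_on with
  | _ n IH =>
  intro hn
  rcases Nat.even_or_odd n with ⟨t, ht⟩ | ⟨t, ht⟩
  · -- even
    have ht1 : 1 ≤ t := by omega
    have e : n = 2 * t := by omega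
    rw [e, phi_two_mul]
    have := IH t (by omega) ht1
    have hm : Nat.log 2 t ≤ Nat.log 2 (2*t) := Nat.log_mono_right (by omega)
    omega
  · -- odd : n = 2t+1
    by_cases h1 : n = 1
    · rw [h1, phi_one]; omega
    have ht1 : 1 ≤ t := by omega
    have e : n = 2 * t + 1 := by omega
    have hlog1 : 1 ≤ Nat.log 2 n := Nat.log_pos (by norm_num) (by omega)
    rcases Nat.even_or_odd t with ⟨u, htu⟩ | ⟨u, htu⟩
    · -- t = 2u
      have hu1 : 1 ≤ u := by omega
      have hb : phi n ≤ 1 + phi u := by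
        rw [e, phi_odd]
        have : phi t = phi u := by rw [show t = 2*u by omega, phi_two_mul]
        omega
      have IHu := IH u (by omega) hu1
      -- log n ≥ log u + 2 since 4u ≤ n
      have hp : 2 ^ (Nat.log 2 u + 2) ≤ n := by
        have := Nat.pow_log_le_self 2 (by omega : u ≠ 0)
        have : 2 ^ (Nat.log 2 u + 2) = 4 * 2 ^ (Nat.log 2 u) := by ring
        omega
      have hl : Nat.log 2 u + 2 ≤ Nat.log 2 n :=
        (Nat.le_log_iff_pow_le (by norm_num) (by omega)).mpr hp
      omega
    · -- t = 2u+1, so t+1 = 2(u+1)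
      set v := u + 1 with hv
      have hv1 : 1 ≤ v := by omega
      have hb : phi n ≤ 1 + phi v := by
        rw [e, phi_odd]
        have : phi (t+1) = phi v := by rw [show t + 1 = 2*v by omega, phi_two_mul]
        omega
      by_cases hpow : v = 2 ^ (Nat.log 2 v)
      · have : phi v = 1 := by rw [hpow, phi_pow]
        omega
      · have hlt : 2 ^ (Nat.log 2 v) < v :=
          lt_of_le_of_ne (Nat.pow_log_le_self 2 (by omega)) (fun h => hpow h.symm)
        have hp : 2 ^ (Nat.log 2 v + 2) ≤ n := by
          have : 2 ^ (Nat.log 2 v + 2) = 4 * 2 ^ (Nat.log 2 v) := by ring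
          omega
        have hl : Nat.log 2 v + 2 ≤ Nat.log 2 n :=
          (Nat.le_log_iff_pow_le (by norm_num) (by omega)).mpr hp
        have IHv := IH v (by omega) hv1
        omega

namespace QV

/-- the `i`-th child of a non-leaf vertex -/
def chd {d : ℕ} (u : QV 2 d) (i : Fin 2) (h : u.val.length < d) : QV 2 d :=
  ⟨u.val ++ [i], by simpa using h⟩

lemma desc_self {d : ℕ} (u : QV 2 d) : u ∈ desc u := List.prefix_rfl

lemma mem_desc {d : ℕ} {u w : QV 2 d} : w ∈ desc u ↔ u.val <+: w.val := Iff.rfl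

lemma desc_leaf {d : ℕ} (u : QV 2 d) (h : u.val.length = d) : desc u = {u} := by
  ext w
  simp only [mem_desc, Set.mem_singleton_iff]
  constructor
  · intro hp
    have h1 := hp.length_le
    have h2 := w.property
    have : u.val = w.val := hp.eq_of_length (by omega)
    exact Subtype.ext this.symm |>.symm ▸ (Subtype.ext this).symm
  · rintro rfl; exact List.prefix_rfl

lemma desc_split {d : ℕ} (u : QV 2 d) (h : u.val.length < d) :
    desc u = {u} ∪ (desc (chd u 0 h) ∪ desc (chd u 1 h)) := by
  ext w
  simp only [mem_desc, Set.mem_union, Set.mem_singleton_iff, chd]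
  constructor
  · intro hp
    by_cases hw : w = u
    · exact Or.inl hw
    · obtain ⟨t, ht⟩ := hp
      have htne : t ≠ [] := by
        intro h0; apply hw; apply Subtype.ext; rw [← ht, h0, List.append_nil]
      obtain ⟨i, t', rfl⟩ := List.exists_cons_of_ne_nil htne
      right
      have : (u.val ++ [i]) <+: w.val := by
        rw [← ht]; exact ⟨t', by simp⟩
      fin_cases i
      · exact Or.inl this
      · exact Or.inr this
  · rintro (rfl | hp | hp)
    · exact List.prefix_rfl
    · exact (List.prefix_append u.val [0]).trans hp
    · exact (List.prefix_append u.val [1]).trans hp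

lemma not_mem_desc_chd {d : ℕ} (u : QV 2 d) (i : Fin 2) (h : u.val.length < d) :
    u ∉ desc (chd u i h) := by
  intro hc
  have := hc.length_le
  simp [chd] at this

lemma desc_chd_disjoint {d : ℕ} (u : QV 2 d) (h : u.val.length < d) :
    Disjoint (desc (chd u 0 h)) (desc (chd u 1 h)) := by
  rw [Set.disjoint_left]
  intro w h0 h1
  have e0 : (u.val ++ [(0 : Fin 2)]) <+: w.val := h0
  have e1 : (u.val ++ [(1 : Fin 2)]) <+: w.val := h1
  obtain ⟨t0, h0'⟩ := e0
  obtain ⟨t1, h1'⟩ := e1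
  rw [← h1'] at h0'
  have h2 : ((0:Fin 2) :: t0) = (1:Fin 2) :: t1 := by
    apply List.append_cancel_left (as := u.val)
    simpa [List.append_assoc] using h0'
  have h3 : (0 : Fin 2) = 1 := by injection h2
  exact absurd h3 (by decide)

lemma ncard_desc_split {d : ℕ} (X : Set (QV 2 d)) (u : QV 2 d) (h : u.val.length < d) :
    (X ∩ desc u).ncard =
      (if u ∈ X then 1 else 0) + (X ∩ desc (chd u 0 h)).ncard + (X ∩ desc (chd u 1 h)).ncard := by
  have hsplit := desc_split u h
  have hfin : ∀ Y : Set (QV 2 d), Y.Finite := fun Y => Y.toFinite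
  have e1 : X ∩ desc u = (X ∩ {u}) ∪ ((X ∩ desc (chd u 0 h)) ∪ (X ∩ desc (chd u 1 h))) := by
    rw [hsplit]; rw [Set.inter_union_distrib_left, Set.inter_union_distrib_left]
  rw [e1]
  have d1 : Disjoint (X ∩ {u}) ((X ∩ desc (chd u 0 h)) ∪ (X ∩ desc (chd u 1 h))) := by
    rw [Set.disjoint_left]
    rintro w ⟨-, hw⟩ hw2
    rcases hw with rfl
    rcases hw2 with ⟨-, hc⟩ | ⟨-, hc⟩ <;>
      [exact not_mem_desc_chd w 0 h hc; exact not_mem_desc_chd w 1 h hc]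
  have d2 : Disjoint (X ∩ desc (chd u 0 h)) (X ∩ desc (chd u 1 h)) :=
    ((desc_chd_disjoint u h).mono (Set.inter_subset_right) (Set.inter_subset_right))
  rw [Set.ncard_union_eq d1 (hfin _) (hfin _), Set.ncard_union_eq d2 (hfin _) (hfin _)]
  have hsing : (X ∩ {u}).ncard = (if u ∈ X then 1 else 0) := by
    rcases Classical.em (u ∈ X) with hu | hu
    · have : X ∩ {u} = {u} := by
        ext w; simp only [Set.mem_inter_iff, Set.mem_singleton_iff]
        constructor
        · exact fun hh => hh.2
        · rintro rfl; exact ⟨hu, rfl⟩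
      simp [this, hu]
    · have : X ∩ {u} = ∅ := by
        ext w; simp only [Set.mem_inter_iff, Set.mem_singleton_iff, Set.mem_empty_iff_false]
        exact ⟨fun hh => hu (hh.2 ▸ hh.1), False.elim⟩
      simp [this, hu]
  rw [hsing]
  omega

lemma adj_chd {d : ℕ} (u : QV 2 d) (i : Fin 2) (h : u.val.length < d) :
    (qTree 2 d).Adj u (chd u i h) := Or.inl ⟨i, rfl⟩

lemma chd_mem_border {d : ℕ} {S : Set (QV 2 d)} {u : QV 2 d} {i : Fin 2} {h : u.val.length < d}
    (hu : u ∈ S) (hc : chd u i h ∉ S) : chd u i h ∈ vertexBorder (qTree 2 d) S :=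
  ⟨hc, u, hu, adj_chd u i h⟩

lemma mem_border_of_chd {d : ℕ} {S : Set (QV 2 d)} {u : QV 2 d} {i : Fin 2} {h : u.val.length < d}
    (hu : u ∉ S) (hc : chd u i h ∈ S) : u ∈ vertexBorder (qTree 2 d) S :=
  ⟨hu, chd u i h, hc, ((qTree 2 d).adj_symm (adj_chd u i h))⟩

lemma border_not_mem {d : ℕ} {S : Set (QV 2 d)} {u : QV 2 d}
    (h : u ∈ vertexBorder (qTree 2 d) S) : u ∉ S := h.1

end QV

lemma phiz_slot {x q : ℤ} {e : ℕ}
    (h : q = 0 ∨ q = 2^e ∨ q = -2^e ∨ q = 2^(e+1) ∨ q = -2^(e+1)) :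
    phiz (x + q) ≤ phiz x + 1 := by
  rcases h with rfl|rfl|rfl|rfl|rfl
  · simp
  · exact (phiz_add_pow e x).1
  · have := (phiz_add_pow e x).2; rw [sub_eq_add_neg] at this; exact this
  · exact (phiz_add_pow (e+1) x).1
  · have := (phiz_add_pow (e+1) x).2; rw [sub_eq_add_neg] at this; exact this

namespace QV

lemma ncard_inter_singleton {d : ℕ} (X : Set (QV 2 d)) (u : QV 2 d) :
    (X ∩ {u}).ncard = (if u ∈ X then 1 else 0) := by
  rcases Classical.em (u ∈ X) with hu | hu
  · have : X ∩ {u} = {u} := by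
      ext w; simp only [Set.mem_inter_iff, Set.mem_singleton_iff]
      exact ⟨fun hh => hh.2, fun hh => ⟨hh ▸ hu, hh⟩⟩
    simp [this, hu]
  · have : X ∩ {u} = ∅ := by
      ext w; simp only [Set.mem_inter_iff, Set.mem_singleton_iff, Set.mem_empty_iff_false]
      exact ⟨fun hh => hu (hh.2 ▸ hh.1), False.elim⟩
    simp [this, hu]

theorem key_lemma {d : ℕ} (S : Set (QV 2 d)) :
    ∀ (n : ℕ) (u : QV 2 d), d - u.val.length = n →
    ∃ W p uu : ℤ,
      ((S ∩ desc u).ncard : ℤ) = (if u ∈ S then (2:ℤ)^(n+1) else 0) + W + p + uu ∧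
      phiz W + (if u ∈ vertexBorder (qTree 2 d) S then 1 else 0)
        ≤ (vertexBorder (qTree 2 d) S ∩ desc u).ncard ∧
      (p = 0 ∨ (u ∈ vertexBorder (qTree 2 d) S ∧ (p = 2^n ∨ p = 2^(n+1)))) ∧
      (uu + (if u ∈ S then 1 else 0)).natAbs + (if u ∈ vertexBorder (qTree 2 d) S then 1 else 0)
        ≤ 3 * (vertexBorder (qTree 2 d) S ∩ desc u).ncard := by
  intro n
  induction n with
  | zero =>
    intro u hn
    have hlen : u.val.length = d := by have := u.property; omega
    have hd := desc_leaf u hlen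
    have hS : ((S ∩ desc u).ncard : ℤ) = (if u ∈ S then 1 else 0) := by
      rw [hd, ncard_inter_singleton]
      split <;> simp
    have hBeq : (vertexBorder (qTree 2 d) S ∩ desc u).ncard
        = (if u ∈ vertexBorder (qTree 2 d) S then 1 else 0) := by
      rw [hd, ncard_inter_singleton]
    by_cases hu : u ∈ S
    · have hnb : u ∉ vertexBorder (qTree 2 d) S := fun hh => hh.1 hu
      refine ⟨0, 0, -1, ?_, ?_, Or.inl rfl, ?_⟩
      · rw [hS]; simp [hu]
      · simp [phiz_zero, hBeq]
      · simp [hu, hnb, hBeq]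
    · refine ⟨0, 0, 0, ?_, ?_, Or.inl rfl, ?_⟩
      · rw [hS]; simp [hu]
      · simp [phiz_zero, hBeq]
      · simp only [hu, if_neg, ite_false, hBeq]
        split <;> simp
  | succ n IH =>
    intro u hn
    have hlen : u.val.length < d := by have := u.property; omega
    set B := vertexBorder (qTree 2 d) S with hBdef
    set c0 := chd u 0 hlen with hc0def
    set c1 := chd u 1 hlen with hc1def
    have hl0 : d - c0.val.length = n := by simp [hc0def, chd]; omega
    have hl1 : d - c1.val.length = n := by simp [hc1def, chd]; omega
    obtain ⟨W0, p0, uu0, e0, f0, g0, j0⟩ := IH c0 hl0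
    obtain ⟨W1, p1, uu1, e1, f1, g1, j1⟩ := IH c1 hl1
    have hA := ncard_desc_split S u hlen
    have hBs := ncard_desc_split B u hlen
    rw [← hc0def, ← hc1def] at hA hBs
    -- abbreviations
    set A : ℤ := ((S ∩ desc u).ncard : ℤ)
    set A0 : ℤ := ((S ∩ desc c0).ncard : ℤ)
    set A1 : ℤ := ((S ∩ desc c1).ncard : ℤ)
    set b : ℕ := (B ∩ desc u).ncard
    set b0 : ℕ := (B ∩ desc c0).ncard
    set b1 : ℕ := (B ∩ desc c1).ncard
    have hAz : A = (if u ∈ S then 1 else 0) + A0 + A1 := by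
      rw [show A = ((S ∩ desc u).ncard : ℤ) from rfl, hA]
      push_cast
      split <;> rfl
    have hBz : b = (if u ∈ B then 1 else 0) + b0 + b1 := hBs
    have hub : u ∈ B → u ∉ S := fun hh => hh.1
    by_cases hu : u ∈ S
    · -- u ∈ S
      have hunb : u ∉ B := fun hh => hh.1 hu
      have hq : ∀ (i : Fin 2) (pi : ℤ),
          (pi = 0 ∨ (chd u i hlen ∈ B ∧ (pi = 2^n ∨ pi = 2^(n+1)))) →
          (if chd u i hlen ∈ S then (0:ℤ) else pi - 2^(n+1)) = 0 ∨
          (if chd u i hlen ∈ S then (0:ℤ) else pi - 2^(n+1)) = 2^n ∨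
          (if chd u i hlen ∈ S then (0:ℤ) else pi - 2^(n+1)) = -2^n ∨
          (if chd u i hlen ∈ S then (0:ℤ) else pi - 2^(n+1)) = 2^(n+1) ∨
          (if chd u i hlen ∈ S then (0:ℤ) else pi - 2^(n+1)) = -2^(n+1) := by
        intro i pi hp
        by_cases hc : chd u i hlen ∈ S
        · simp [hc]
        · simp only [hc, if_neg, ite_false]
          rcases hp with rfl | ⟨hb, rfl | rfl⟩
          · right; right; right; right; ring
          · right; right; left
            have : (2:ℤ)^(n+1) = 2 * 2^n := by ring
            rw [this]; ring
          · left; ring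
      have hp00 : c0 ∈ S → p0 = 0 := by
        intro hc; rcases g0 with h | ⟨hb, -⟩; · exact h
        · exact absurd hc hb.1
      have hp10 : c1 ∈ S → p1 = 0 := by
        intro hc; rcases g1 with h | ⟨hb, -⟩; · exact h
        · exact absurd hc hb.1
      have hob0 : c0 ∉ S → c0 ∈ B := fun h => chd_mem_border hu h
      have hob1 : c1 ∉ S → c1 ∈ B := fun h => chd_mem_border hu h
      set q0 : ℤ := (if c0 ∈ S then (0:ℤ) else p0 - 2^(n+1)) with hq0def
      set q1 : ℤ := (if c1 ∈ S then (0:ℤ) else p1 - 2^(n+1)) with hq1def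
      refine ⟨W0 + W1 + q0 + q1, 0, uu0 + uu1 + 1, ?_, ?_, Or.inl rfl, ?_⟩
      · -- size identity
        rw [hAz, e0, e1]
        have hpow : (2:ℤ)^(n+1+1) = 2 * 2^(n+1) := by ring
        simp only [if_pos hu, hpow]
        by_cases hs0 : c0 ∈ S <;> by_cases hs1 : c1 ∈ S <;>
          simp only [hq0def, hq1def, hs0, hs1, if_pos, if_neg, ite_true, ite_false] <;>
          [rw [hp00 hs0, hp10 hs1]; rw [hp00 hs0]; rw [hp10 hs1]; skip] <;> ring
      · -- phi bound
        have s1 : phiz (W0 + W1) ≤ phiz W0 + phiz W1 := phiz_add_le _ _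
        have s2 : phiz (W0 + W1 + q0) ≤ phiz (W0 + W1) + (if c0 ∈ S then 0 else 1) := by
          by_cases hs0 : c0 ∈ S
          · simp [hq0def, hs0]
          · have hqq : q0 = p0 - 2^(n+1) := by rw [hq0def, if_neg hs0]
            simp only [hs0, ite_false, if_neg]
            rw [hqq]
            have h5 := hq 0 p0 g0
            rw [← hc0def] at h5
            simp only [hs0, ite_false, if_neg] at h5
            exact phiz_slot (x := W0 + W1) (e := n) h5
        have s3 : phiz (W0 + W1 + q0 + q1) ≤ phiz (W0 + W1 + q0) + (if c1 ∈ S then 0 else 1) := by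
          by_cases hs1 : c1 ∈ S
          · simp [hq1def, hs1]
          · have hqq : q1 = p1 - 2^(n+1) := by rw [hq1def, if_neg hs1]
            simp only [hs1, ite_false, if_neg]
            rw [hqq]
            have h5 := hq 1 p1 g1
            rw [← hc1def] at h5
            simp only [hs1, ite_false, if_neg] at h5
            exact phiz_slot (x := W0 + W1 + q0) (e := n) h5
        rw [hBz]
        simp only [hunb, ite_false, if_neg]
        by_cases hs0 : c0 ∈ S <;> by_cases hs1 : c1 ∈ S <;>
          simp only [hs0, hs1, ite_true, ite_false, if_pos, if_neg] at s2 s3 ⊢ <;>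
          [skip;
           (have := hob1 hs1; simp only [this, ite_true, if_pos] at f1);
           (have := hob0 hs0; simp only [this, ite_true, if_pos] at f0);
           (have h1 := hob0 hs0; have h2 := hob1 hs1;
            simp only [h1, h2, ite_true, if_pos] at f0 f1)] <;>
          omega
      · -- units bound
        rw [hBz]
        simp only [hunb, hu, ite_true, ite_false, if_pos, if_neg]
        by_cases hs0 : c0 ∈ S <;> by_cases hs1 : c1 ∈ S <;>
          simp only [hs0, hs1, ite_true, ite_false, if_pos, if_neg] at j0 j1 <;>
          [skip;
           (have := hob1 hs1; simp only [this, ite_true, if_pos] at j1);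
           (have := hob0 hs0; simp only [this, ite_true, if_pos] at j0);
           (have h1 := hob0 hs0; have h2 := hob1 hs1;
            simp only [h1, ite_true, if_pos] at j0; simp only [h2, ite_true, if_pos] at j1)] <;>
          omega
    · -- u ∉ S
      have hib0 : c0 ∈ S → u ∈ B := fun h => mem_border_of_chd hu h
      have hib1 : c1 ∈ S → u ∈ B := fun h => mem_border_of_chd hu h
      have hpb0 : p0 ≠ 0 → c0 ∈ B := by
        intro h; rcases g0 with h' | ⟨hb, -⟩; · exact absurd h' h
        · exact hb
      have hpb1 : p1 ≠ 0 → c1 ∈ B := by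
        intro h; rcases g1 with h' | ⟨hb, -⟩; · exact absurd h' h
        · exact hb
      refine ⟨W0 + W1 + p0 + p1,
        ((if c0 ∈ S then 1 else 0) + (if c1 ∈ S then 1 else 0) : ℤ) * 2^(n+1),
        uu0 + uu1, ?_, ?_, ?_, ?_⟩
      · -- size identity
        rw [hAz, e0, e1]
        simp only [if_neg hu]
        by_cases hs0 : c0 ∈ S <;> by_cases hs1 : c1 ∈ S <;>
          simp only [hs0, hs1, ite_true, ite_false, if_pos, if_neg] <;> ring
      · -- phi bound
        have s1 : phiz (W0 + W1) ≤ phiz W0 + phiz W1 := phiz_add_le _ _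
        have s2 : phiz (W0 + W1 + p0) ≤ phiz (W0 + W1) + (if p0 = 0 then 0 else 1) := by
          by_cases hz : p0 = 0
          · simp [hz]
          · rcases g0 with h' | ⟨-, h' | h'⟩; · exact absurd h' hz
            · simp only [hz, ite_false, if_neg]
              exact phiz_slot (x := W0 + W1) (e := n) (Or.inr (Or.inl h'))
            · simp only [hz, ite_false, if_neg]
              exact phiz_slot (x := W0 + W1) (e := n) (Or.inr (Or.inr (Or.inr (Or.inl h'))))
        have s3 : phiz (W0 + W1 + p0 + p1) ≤ phiz (W0 + W1 + p0) + (if p1 = 0 then 0 else 1) := by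
          by_cases hz : p1 = 0
          · simp [hz]
          · rcases g1 with h' | ⟨-, h' | h'⟩; · exact absurd h' hz
            · simp only [hz, ite_false, if_neg]
              exact phiz_slot (x := W0 + W1 + p0) (e := n) (Or.inr (Or.inl h'))
            · simp only [hz, ite_false, if_neg]
              exact phiz_slot (x := W0 + W1 + p0) (e := n) (Or.inr (Or.inr (Or.inr (Or.inl h'))))
        rw [hBz]
        by_cases hz0 : p0 = 0 <;> by_cases hz1 : p1 = 0 <;>
          simp only [hz0, hz1, ite_true, ite_false, if_pos, if_neg] at s2 s3 ⊢ <;>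
          [skip;
           (have := hpb1 hz1; simp only [this, ite_true, if_pos] at f1);
           (have := hpb0 hz0; simp only [this, ite_true, if_pos] at f0);
           (have h1 := hpb0 hz0; have h2 := hpb1 hz1;
            simp only [h1, ite_true, if_pos] at f0; simp only [h2, ite_true, if_pos] at f1)] <;>
          omega
      · -- p condition
        by_cases hs0 : c0 ∈ S <;> by_cases hs1 : c1 ∈ S <;>
          simp only [hs0, hs1, ite_true, ite_false, if_pos, if_neg]
        · exact Or.inr ⟨hib0 hs0, Or.inr (by ring)⟩
        · exact Or.inr ⟨hib0 hs0, Or.inl (by ring)⟩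
        · exact Or.inr ⟨hib1 hs1, Or.inl (by ring)⟩
        · exact Or.inl (by ring)
      · -- units bound
        rw [hBz]
        simp only [hu, ite_false, if_neg]
        by_cases hs0 : c0 ∈ S <;> by_cases hs1 : c1 ∈ S <;>
          simp only [hs0, hs1, ite_true, ite_false, if_pos, if_neg] at j0 j1 <;>
          [(have h1 := hib0 hs0; simp only [h1, ite_true, if_pos]);
           (have h1 := hib0 hs0; simp only [h1, ite_true, if_pos]);
           (have h1 := hib1 hs1; simp only [h1, ite_true, if_pos]);
           skip] <;>
          omega

end QV

namespace QV

def qvCons {q d : ℕ} : Option (Fin q × QV q d) → QV q (d+1)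
  | none => ⟨[], by simp⟩
  | some (a, l) => ⟨a :: l.val, by simpa using Nat.succ_le_succ l.property⟩

lemma qvCons_bijective {q d : ℕ} : Function.Bijective (qvCons (q := q) (d := d)) := by
  constructor
  · rintro (_ | ⟨a, l⟩) (_ | ⟨b, m⟩) h <;> simp [qvCons] at h ⊢
    · exact absurd (congrArg (fun v : QV q (d+1) => v.val) h) (by simp [qvCons])
    · exact absurd (congrArg (fun v : QV q (d+1) => v.val) h) (by simp [qvCons])
    · have := congrArg (fun v : QV q (d+1) => v.val) h
      simp [qvCons] at this
      exact ⟨this.1, Subtype.ext this.2⟩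
  · intro v
    match hv : v.val, v.property with
    | [], _ => exact ⟨none, by apply Subtype.ext; simp [qvCons, hv]⟩
    | a :: t, hp => exact ⟨some (a, ⟨t, by have := v.property; rw [hv] at this; simpa using this⟩),
        by apply Subtype.ext; simp [qvCons, hv]⟩

instance qvUnique {q : ℕ} : Unique (QV q 0) where
  default := ⟨[], by simp⟩
  uniq := by
    rintro ⟨l, hl⟩
    apply Subtype.ext
    simpa using List.length_eq_zero_iff.mp (Nat.le_zero.mp hl)

lemma card_qv (d : ℕ) : Nat.card (QV 2 d) = 2^(d+1) - 1 := by
  induction d with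
  | zero => simp [Nat.card_unique]
  | succ d IH =>
    have h1 : Nat.card (QV 2 (d+1)) = Nat.card (Option (Fin 2 × QV 2 d)) :=
      (Nat.card_eq_of_bijective _ qvCons_bijective).symm
    rw [h1, Finite.card_option, Nat.card_prod, Nat.card_eq_fintype_card (α := Fin 2),
      Fintype.card_fin, IH]
    have : 1 ≤ 2^(d+1) := Nat.one_le_two_pow
    ring_nf
    omega

lemma desc_root {d : ℕ} : desc (⟨[], by simp⟩ : QV 2 d) = Set.univ := by
  ext w; simp [mem_desc]; exact List.nil_prefix

end QV

namespace QV

lemma phiz_natCast (n : ℕ) : phiz (n : ℤ) = phi n := by simp [phiz]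

lemma phiz_pow2 (e : ℕ) : phiz ((2:ℤ)^e) = 1 := by
  have : ((2:ℤ)^e) = ((2^e : ℕ) : ℤ) := by push_cast; ring
  rw [this, phiz_natCast, phi_pow]

lemma sstar_phi {d : ℕ} (hd : 1 ≤ d) : d/2 + 1 ≤ phi ((2^(d+1) + 1)/3) := by
  rcases Nat.even_or_odd d with ⟨m, hm⟩ | ⟨m, hm⟩
  · -- d = 2m
    have hm1 : 1 ≤ m := by omega
    have h3 : 3 * aseq m + 1 = 4^m := aseq_3 m
    have h4 : (4:ℕ)^m = 2^d := by rw [hm]; rw [show (4:ℕ) = 2^2 by norm_num, ← pow_mul]; ring_nf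
    have hs : (2^(d+1) + 1)/3 = 2 * aseq m + 1 := by
      have h5 : 2^(d+1) = 2 * 2^d := by ring
      omega
    rw [hs]
    have := (aseq_phi m).2
    omega
  · -- d = 2m+1
    have h3 : 3 * aseq (m+1) + 1 = 4^(m+1) := aseq_3 (m+1)
    have h4 : (4:ℕ)^(m+1) = 2^(d+1) := by
      rw [show (4:ℕ) = 2^2 by norm_num, ← pow_mul]; congr 1; omega
    have hs : (2^(d+1) + 1)/3 = aseq (m+1) := by omega
    rw [hs]
    have := (aseq_phi (m+1)).1
    omega

lemma natLog_le_logb (n : ℕ) (hn : 1 ≤ n) : (Nat.log 2 n : ℝ) ≤ Real.logb 2 n := by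
  have h1 : ((2:ℕ)^(Nat.log 2 n) : ℝ) ≤ (n : ℝ) := by
    exact_mod_cast Nat.pow_log_le_self 2 (by omega)
  have hpos : (0:ℝ) < (2:ℝ)^(Nat.log 2 n) := by positivity
  have h1' : ((2:ℝ))^(Nat.log 2 n) ≤ (n:ℝ) := by push_cast at h1; exact h1
  have h2 : Real.logb 2 ((2:ℝ)^(Nat.log 2 n)) ≤ Real.logb 2 n :=
    Real.logb_le_logb_of_le (by norm_num : (1:ℝ) < 2) hpos h1'
  rwa [Real.logb_pow, Real.logb_self_eq_one (by norm_num), mul_one] at h2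

/-- the central lower bound for a single set -/
lemma border_lower {d : ℕ} (hd : 1 ≤ d) (S : Set (QV 2 d))
    (hS : S.ncard = (2^(d+1) + 1)/3) :
    ((d:ℝ) - Real.logb 2 d - 3 - Real.logb 2 3)/2 ≤ ((vertexBorder (qTree 2 d) S).ncard : ℝ) := by
  set B := vertexBorder (qTree 2 d) S with hB
  set b : ℕ := B.ncard with hbdef
  set sstar : ℕ := (2^(d+1) + 1)/3 with hsdef
  have hlogd : (0:ℝ) ≤ Real.logb 2 d := Real.logb_nonneg (by norm_num) (by exact_mod_cast hd)
  have hlog3 : (0:ℝ) ≤ Real.logb 2 3 := Real.logb_nonneg (by norm_num) (by norm_num)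
  -- apply key lemma at the root
  set root : QV 2 d := ⟨[], by simp⟩ with hroot
  have hrlen : d - root.val.length = d := by simp [hroot]
  obtain ⟨W, p, uu, he, hf, hg, hj⟩ := key_lemma S d root hrlen
  rw [desc_root] at he hf hj
  rw [Set.inter_univ] at he hf hj
  rw [hS] at he
  rw [← hB] at hf hj hg
  rw [← hbdef] at hf hj
  -- phi sstar ≤ 1 + phiz W + phiz uu
  have hX : phiz ((if root ∈ S then (2:ℤ)^(d+1) else 0) + p) ≤ 1 := by
    by_cases hr : root ∈ S
    · have hp0 : p = 0 := by
        rcases hg with h | ⟨hbmem, -⟩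
        · exact h
        · exact absurd hr hbmem.1
      simp only [hr, ite_true, if_pos, hp0, add_zero]
      rw [phiz_pow2]
    · simp only [hr, ite_false, if_neg, zero_add]
      rcases hg with h | ⟨-, h | h⟩
      · simp [h, phiz_zero]
      · rw [h, phiz_pow2]
      · rw [h, phiz_pow2]
  have hsplit : phiz ((sstar : ℤ)) ≤ 1 + phiz W + phiz uu := by
    have e2 : (sstar : ℤ) = ((if root ∈ S then (2:ℤ)^(d+1) else 0) + p) + W + uu := by
      rw [he]; ring
    calc phiz ((sstar : ℤ)) = phiz ((((if root ∈ S then (2:ℤ)^(d+1) else 0) + p) + W) + uu) := by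
            rw [← e2]
      _ ≤ phiz (((if root ∈ S then (2:ℤ)^(d+1) else 0) + p) + W) + phiz uu := phiz_add_le _ _
      _ ≤ (phiz ((if root ∈ S then (2:ℤ)^(d+1) else 0) + p) + phiz W) + phiz uu :=
            add_le_add_left (phiz_add_le _ _) _
      _ ≤ 1 + phiz W + phiz uu := by omega
  have hWb : phiz W ≤ b := by omega
  have huu : uu.natAbs ≤ 3 * b + 1 := by
    rcases Classical.em (root ∈ S) with hr | hr <;> simp only [hr, ite_true, ite_false, if_pos, if_neg] at hj <;> omega
  have hmain : d/2 + 1 ≤ 1 + b + phi uu.natAbs := by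
    have h1 := sstar_phi hd
    rw [← hsdef] at h1
    have h2 : phiz ((sstar:ℤ)) = phi sstar := phiz_natCast sstar
    have h3 : phiz uu = phi uu.natAbs := rfl
    omega
  -- real arithmetic
  by_cases hbig : (d:ℝ) ≤ 2 * b
  · nlinarith [hlogd, hlog3]
  · push_neg at hbig
    have hb2 : 2 * b + 1 ≤ d := by
      have h' : ((2*b : ℕ) : ℝ) < (d : ℝ) := by push_cast; linarith
      have := Nat.cast_lt.mp h'
      omega
    by_cases huu0 : uu.natAbs = 0
    · -- b ≥ d/2 directly
      rw [huu0, phi_zero] at hmain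
      have : ((d/2 : ℕ) : ℝ) ≤ (b : ℝ) := by
        have h9 : d/2 ≤ b := by omega
        exact_mod_cast h9
      have hdd : ((d:ℝ) - 1)/2 ≤ ((d/2 : ℕ) : ℝ) := by
        have : d - 1 ≤ 2 * (d/2) := by omega
        have := (by exact_mod_cast this : ((d:ℝ) - 1) ≤ 2 * ((d/2:ℕ):ℝ))
        linarith
      nlinarith [hlogd, hlog3]
    · have huu1 : 1 ≤ uu.natAbs := by omega
      have hlog : 2 * phi uu.natAbs ≤ Nat.log 2 uu.natAbs + 3 := phi_le_log _ huu1
      have hnl : (Nat.log 2 uu.natAbs : ℝ) ≤ Real.logb 2 uu.natAbs := natLog_le_logb _ huu1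
      have hub : ((uu.natAbs : ℕ) : ℝ) ≤ 3 * (d:ℝ) / 2 := by
        have : (uu.natAbs : ℝ) ≤ 3 * b + 1 := by exact_mod_cast huu
        have hb3 : (b:ℝ) ≤ ((d:ℝ) - 1)/2 := by
          have : (2*b + 1 : ℝ) ≤ d := by exact_mod_cast hb2
          linarith
        linarith
      have hmono : Real.logb 2 uu.natAbs ≤ Real.logb 2 (3 * (d:ℝ) / 2) := by
        apply Real.logb_le_logb_of_le (by norm_num : (1:ℝ) < 2)
          (by exact_mod_cast huu1 : (0:ℝ) < (uu.natAbs:ℝ)) hub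
      have hexp : Real.logb 2 (3 * (d:ℝ) / 2) = Real.logb 2 3 + Real.logb 2 d - 1 := by
        rw [Real.logb_div (by positivity) (by norm_num),
            Real.logb_mul (by norm_num) (by positivity),
            Real.logb_self_eq_one (by norm_num)]
      have hcast : ((d/2 : ℕ) : ℝ) ≥ ((d:ℝ) - 1)/2 := by
        have : d - 1 ≤ 2 * (d/2) := by omega
        have := (by exact_mod_cast this : ((d:ℝ) - 1) ≤ 2 * ((d/2:ℕ):ℝ))
        linarith
      have hmainR : ((d/2 : ℕ) : ℝ) ≤ (b:ℝ) + (phi uu.natAbs : ℝ) := by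
        have h9 : d/2 ≤ b + phi uu.natAbs := by omega
        exact_mod_cast h9
      have hphiR : (phi uu.natAbs : ℝ) ≤ ((Nat.log 2 uu.natAbs : ℝ) + 3)/2 := by
        have : (2 * phi uu.natAbs : ℝ) ≤ (Nat.log 2 uu.natAbs : ℝ) + 3 := by exact_mod_cast hlog
        linarith
      linarith

end QV

namespace QV

lemma lower_peak {d : ℕ} (hd : 1 ≤ d) :
    ((d:ℝ) - Real.logb 2 d - 3 - Real.logb 2 3)/2 ≤ (isoPeak (qTree 2 d) : ℝ) := by
  classical
  set sstar : ℕ := (2^(d+1) + 1)/3 with hsdef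
  have hpow4 : 4 ≤ 2^(d+1) := by
    calc (4:ℕ) = 2^2 := by norm_num
    _ ≤ 2^(d+1) := Nat.pow_le_pow_right (by norm_num) (by omega)
  have hsle : sstar ≤ Nat.card (QV 2 d) := by
    rw [card_qv]; omega
  -- a set of the right size exists
  haveI : Fintype (QV 2 d) := Fintype.ofFinite _
  obtain ⟨t, -, ht⟩ := Finset.exists_subset_card_eq (s := (Finset.univ : Finset (QV 2 d))) (n := sstar)
    (by rw [Finset.card_univ, ← Nat.card_eq_fintype_card]; exact hsle)
  have hS0 : (↑t : Set (QV 2 d)).ncard = sstar := by rw [Set.ncard_coe_finset]; exact ht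
  have hne : {S : Set (QV 2 d) | S.ncard = sstar}.Nonempty := ⟨↑t, hS0⟩
  have hne2 : ((fun S => (vertexBorder (qTree 2 d) S).ncard) ''
      {S : Set (QV 2 d) | S.ncard = sstar}).Nonempty := hne.image _
  have hmem := Nat.sInf_mem hne2
  obtain ⟨S1, hS1, hS1e⟩ := hmem
  have hlow := border_lower hd S1 hS1
  have h1 : ((d:ℝ) - Real.logb 2 d - 3 - Real.logb 2 3)/2 ≤ (isoProfile (qTree 2 d) sstar : ℝ) := by
    rw [isoProfile, ← hS1e]
    exact hlow
  have h2 : isoProfile (qTree 2 d) sstar ≤ isoPeak (qTree 2 d) := by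
    apply le_csSup
    · exact ((Set.finite_Icc 0 (Nat.card (QV 2 d))).image _).bddAbove
    · exact ⟨sstar, ⟨Nat.zero_le _, hsle⟩, rfl⟩
  calc ((d:ℝ) - Real.logb 2 d - 3 - Real.logb 2 3)/2 ≤ (isoProfile (qTree 2 d) sstar : ℝ) := h1
  _ ≤ (isoPeak (qTree 2 d) : ℝ) := by exact_mod_cast h2

end QV

namespace QV

def rt (h : ℕ) : QV 2 h := ⟨[], by simp⟩

def emb2 {h : ℕ} (c1 c2 : Fin 2) (v : QV 2 h) : QV 2 (h+2) :=
  ⟨c1 :: c2 :: v.val, by simp; have := v.property; omega⟩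

lemma emb2_val {h : ℕ} (c1 c2 : Fin 2) (v : QV 2 h) :
    (emb2 c1 c2 v).val = c1 :: c2 :: v.val := rfl

lemma emb2_inj {h : ℕ} (c1 c2 : Fin 2) : Function.Injective (emb2 (h := h) c1 c2) := by
  intro x y hxy
  have h1 := congrArg (fun v : QV 2 (h+2) => v.val) hxy
  simp only [emb2_val] at h1
  apply Subtype.ext
  injection h1 with _ h2
  injection h2 with _ h3

lemma emb2_ncard {h : ℕ} (c1 c2 : Fin 2) (P : Set (QV 2 h)) :
    (emb2 c1 c2 '' P).ncard = P.ncard :=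
  Set.ncard_image_of_injective P (emb2_inj c1 c2)

lemma vB_union {V : Type*} (G : SimpleGraph V) (A B : Set V) :
    vertexBorder G (A ∪ B) ⊆
      ((vertexBorder G A ∪ vertexBorder G B) \ (A ∪ B)) := by
  rintro x ⟨hx, y, hy, hadj⟩
  refine ⟨?_, hx⟩
  rcases hy with hy | hy
  · exact Or.inl ⟨fun hh => hx (Or.inl hh), y, hy, hadj⟩
  · exact Or.inr ⟨fun hh => hx (Or.inr hh), y, hy, hadj⟩

lemma vB_univ {V : Type*} (G : SimpleGraph V) : vertexBorder G (Set.univ : Set V) = ∅ := by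
  ext x; simp [vertexBorder]

lemma vB_subset_compl {V : Type*} (G : SimpleGraph V) (S : Set V) :
    vertexBorder G S ⊆ Sᶜ := fun _ hx => hx.1

/-- border of an embedded set -/
lemma border_emb2 {h : ℕ} (c1 c2 : Fin 2) (P : Set (QV 2 h)) :
    vertexBorder (qTree 2 (h+2)) (emb2 c1 c2 '' P) ⊆
      (emb2 c1 c2 '' (vertexBorder (qTree 2 h) P)) ∪
      (if rt h ∈ P then {(⟨[c1], by simp⟩ : QV 2 (h+2))} else ∅) := by
  rintro x ⟨hx, y, ⟨z, hz, rfl⟩, hadj⟩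
  rcases hadj with ⟨i, hxy⟩ | ⟨i, hyx⟩
  · -- x = emb2 z ++ [i]
    have hxval : x.val = c1 :: c2 :: (z.val ++ [i]) := by
      rw [hxy, emb2_val]; simp
    have hlen : (z.val ++ [i]).length ≤ h := by
      have hx2 := x.property
      rw [hxval] at hx2
      simp at hx2 ⊢
      omega
    refine Or.inl ⟨⟨z.val ++ [i], hlen⟩, ⟨?_, z, hz, Or.inl ⟨i, rfl⟩⟩, ?_⟩
    · intro hw
      exact hx ⟨⟨z.val ++ [i], hlen⟩, hw, (Subtype.ext (hxval.trans (emb2_val c1 c2 (⟨z.val ++ [i], hlen⟩ : QV 2 h)).symm)).symm⟩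
    · exact (Subtype.ext (hxval.trans (emb2_val c1 c2 (⟨z.val ++ [i], hlen⟩ : QV 2 h)).symm)).symm
  · -- emb2 z = x ++ [i]
    have hyval : c1 :: c2 :: z.val = x.val ++ [i] := by rw [← emb2_val c1 c2 z, hyx]
    rcases hxl : x.val with _ | ⟨a, _ | ⟨b, t⟩⟩
    · exfalso
      rw [hxl] at hyval
      have := congrArg List.length hyval
      simp at this
    · -- x = [a] : so z = root
      rw [hxl] at hyval
      have ha : c1 = a := by injection hyval
      have h2 : c2 :: z.val = [i] := by injection hyval
      have hz0 : z.val = [] := by injection h2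
      have hzrt : z = rt h := Subtype.ext (by rw [hz0]; rfl)
      rw [hzrt] at hz
      rw [if_pos hz]
      right
      show x = _
      exact Subtype.ext (by rw [hxl, ha])
    · -- x = a :: b :: t
      rw [hxl] at hyval
      have ha : c1 = a := by injection hyval
      have h2 : c2 :: z.val = b :: (t ++ [i]) := by injection hyval
      have hb : c2 = b := by injection h2
      have hzv : z.val = t ++ [i] := by injection h2
      have hlen : t.length ≤ h := by
        have hx2 := x.property
        rw [hxl] at hx2
        simp at hx2
        omega
      refine Or.inl ⟨⟨t, hlen⟩, ⟨?_, z, hz, Or.inr ⟨i, hzv⟩⟩, ?_⟩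
      · intro hw
        exact hx ⟨(⟨t, hlen⟩ : QV 2 h), hw, Subtype.ext (((emb2_val c1 c2 (⟨t, hlen⟩ : QV 2 h)).trans (by rw [ha, hb])).trans hxl.symm)⟩
      · exact Subtype.ext (((emb2_val c1 c2 (⟨t, hlen⟩ : QV 2 h)).trans (by rw [ha, hb])).trans hxl.symm)

end QV

namespace QV

lemma vB_empty {V : Type*} (G : SimpleGraph V) : vertexBorder G (∅ : Set V) = ∅ := by
  ext x; simp [vertexBorder]

lemma rt_not_mem_emb2 {h : ℕ} (c1 c2 : Fin 2) (A : Set (QV 2 h)) :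
    rt (h+2) ∉ emb2 c1 c2 '' A := by
  rintro ⟨z, -, hz⟩
  have := congrArg (fun v : QV 2 (h+2) => v.val) hz
  simp [emb2_val, rt] at this

lemma single_not_mem_emb2 {h : ℕ} (c c1 c2 : Fin 2) (A : Set (QV 2 h)) (hp : [c].length ≤ h + 2) :
    (⟨[c], hp⟩ : QV 2 (h+2)) ∉ emb2 c1 c2 '' A := by
  rintro ⟨z, -, hz⟩
  have := congrArg (fun v : QV 2 (h+2) => v.val.length) hz
  simp [emb2_val] at this

lemma emb2_disjoint {h : ℕ} {c1 c2 d1 d2 : Fin 2} (hne : (c1, c2) ≠ (d1, d2))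
    (A B : Set (QV 2 h)) : Disjoint (emb2 c1 c2 '' A) (emb2 d1 d2 '' B) := by
  rw [Set.disjoint_left]
  rintro x ⟨z, -, rfl⟩ ⟨w, -, hw⟩
  have := congrArg (fun v : QV 2 (h+2) => v.val) hw
  simp only [emb2_val] at this
  apply hne
  have h1 : d1 = c1 := by injection this
  have h2 : d2 :: w.val = c2 :: z.val := by injection this
  have h2' : d2 = c2 := by injection h2
  rw [h1, h2']

lemma border_single2 {h : ℕ} (c : Fin 2) :
    vertexBorder (qTree 2 (h+2)) {(⟨[c], by simp⟩ : QV 2 (h+2))} ⊆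
      {rt (h+2), emb2 c 0 (rt h), emb2 c 1 (rt h)} := by
  rintro x ⟨hx, y, hy, hadj⟩
  rcases hy with rfl
  rcases hadj with ⟨i, hxy⟩ | ⟨i, hyx⟩
  · -- x = [c] ++ [i] = [c, i]
    have : x = emb2 c i (rt h) := Subtype.ext (by rw [emb2_val, hxy]; rfl)
    fin_cases i
    · right; left; exact this
    · right; right; exact this
  · -- [c] = x ++ [i]
    rcases hxl : x.val with _ | ⟨a, l⟩
    · left; exact Subtype.ext (by rw [hxl]; rfl)
    · exfalso
      rw [hxl] at hyx
      have := congrArg List.length hyx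
      simp at this

lemma border_root2 {h : ℕ} :
    vertexBorder (qTree 2 (h+2)) {rt (h+2)} ⊆
      {(⟨[0], by simp⟩ : QV 2 (h+2)), (⟨[1], by simp⟩ : QV 2 (h+2))} := by
  rintro x ⟨hx, y, hy, hadj⟩
  rcases hy with rfl
  rcases hadj with ⟨i, hxy⟩ | ⟨i, hyx⟩
  · have hxv : x.val = [i] := by rw [hxy]; rfl
    fin_cases i
    · left; exact Subtype.ext (by rw [hxv]; rfl)
    · right; exact Subtype.ext (by rw [hxv]; rfl)
  · exfalso
    have := congrArg List.length hyx
    simp [rt] at this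

lemma vB_union' {V : Type*} (G : SimpleGraph V) (A B : Set V) :
    vertexBorder G (A ∪ B) ⊆ vertexBorder G A ∪ vertexBorder G B :=
  fun x hx => (vB_union G A B hx).1

lemma ncard_ite_single {V : Type*} (c : Prop) [Decidable c] (x : V) :
    (if c then ({x} : Set V) else ∅).ncard ≤ 1 := by
  split <;> simp

end QV

namespace QV

lemma ub_step (k : ℕ)
    (IHk : ∀ s : ℕ, s ≤ 2^(k+1) - 1 →
      ∃ S : Set (QV 2 k), S.ncard = s ∧
        (vertexBorder (qTree 2 k) S).ncard ≤ (k+1)/2 ∧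
        (vertexBorder (qTree 2 k) S).ncard + (if rt k ∈ S then 1 else 0) ≤ (k+1)/2 + 1) :
    ∀ s : ℕ, s ≤ 2^(k+2+1) - 1 →
    ∃ S : Set (QV 2 (k+2)), S.ncard = s ∧
      (vertexBorder (qTree 2 (k+2)) S).ncard ≤ (k+2+1)/2 ∧
      (vertexBorder (qTree 2 (k+2)) S).ncard + (if rt (k+2) ∈ S then 1 else 0) ≤ (k+2+1)/2 + 1 := by
  intro s hs
  set M : ℕ := 2^(k+1) - 1 with hMdef
  have hpw : 2^(k+2+1) = 4 * 2^(k+1) := by ring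
  have hpw1 : 1 ≤ 2^(k+1) := Nat.one_le_two_pow
  have hsM : s ≤ 4*M + 3 := by omega
  have hMuniv : (Set.univ : Set (QV 2 k)).ncard = M := by rw [Set.ncard_univ, card_qv]
  have hf : (k+2+1)/2 = (k+1)/2 + 1 := by omega
  have hf1 : 1 ≤ (k+2+1)/2 := by omega
  set f' : ℕ := (k+1)/2 with hf'def
  -- special vertices and sets
  set v0 : QV 2 (k+2) := ⟨[0], by simp⟩ with hv0def
  set v1 : QV 2 (k+2) := ⟨[1], by simp⟩ with hv1def
  set U00 : Set (QV 2 (k+2)) := emb2 0 0 '' Set.univ with hU00def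
  set U01 : Set (QV 2 (k+2)) := emb2 0 1 '' Set.univ with hU01def
  set U10 : Set (QV 2 (k+2)) := emb2 1 0 '' Set.univ with hU10def
  set D0 : Set (QV 2 (k+2)) := insert v0 (U00 ∪ U01) with hD0def
  set X4 : Set (QV 2 (k+2)) := insert (rt (k+2)) D0 with hX4def
  -- border facts for full pieces
  have hU00b : vertexBorder (qTree 2 (k+2)) U00 ⊆ {v0} := by
    have h1 := border_emb2 (h := k) 0 0 Set.univ
    rw [vB_univ, Set.image_empty, if_pos (Set.mem_univ _)] at h1
    rw [hU00def]
    intro x hx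
    rcases h1 hx with h | h
    · exact absurd h (Set.notMem_empty x)
    · exact h
  have hU01b : vertexBorder (qTree 2 (k+2)) U01 ⊆ {v0} := by
    have h1 := border_emb2 (h := k) 0 1 Set.univ
    rw [vB_univ, Set.image_empty, if_pos (Set.mem_univ _)] at h1
    rw [hU01def]
    intro x hx
    rcases h1 hx with h | h
    · exact absurd h (Set.notMem_empty x)
    · exact h
  have hU10b : vertexBorder (qTree 2 (k+2)) U10 ⊆ {v1} := by
    have h1 := border_emb2 (h := k) 1 0 Set.univ
    rw [vB_univ, Set.image_empty, if_pos (Set.mem_univ _)] at h1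
    rw [hU10def]
    intro x hx
    rcases h1 hx with h | h
    · exact absurd h (Set.notMem_empty x)
    · exact h
  -- membership facts
  have hv0U : v0 ∉ U00 ∪ U01 := by
    rintro (h | h)
    · exact single_not_mem_emb2 0 0 0 _ (by simp) h
    · exact single_not_mem_emb2 0 0 1 _ (by simp) h
  have hrtD0 : rt (k+2) ∉ D0 := by
    rintro (h | h | h)
    · exact absurd (congrArg (fun v : QV 2 (k+2) => v.val) h) (by simp [rt, hv0def])
    · exact rt_not_mem_emb2 0 0 _ h
    · exact rt_not_mem_emb2 0 1 _ h
  have hv1D0 : v1 ∉ X4 := by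
    rintro (h | h | h | h)
    · exact absurd (congrArg (fun v : QV 2 (k+2) => v.val) h) (by simp [rt, hv1def])
    · exact absurd (congrArg (fun v : QV 2 (k+2) => v.val) h) (by simp [hv0def, hv1def])
    · exact single_not_mem_emb2 1 0 0 _ (by simp) h
    · exact single_not_mem_emb2 1 0 1 _ (by simp) h
  -- border of D0
  have hD0b : vertexBorder (qTree 2 (k+2)) D0 ⊆ {rt (k+2)} := by
    intro x hx
    have hxn : x ∉ D0 := hx.1
    rw [hD0def, Set.insert_eq] at hx
    rcases vB_union _ _ _ hx with ⟨h1 | h1, -⟩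
    · rcases border_single2 (h := k) 0 h1 with h | h | h
      · exact h
      · exact absurd (h ▸ hxn) (by intro hh; exact hh (Or.inr (Or.inl ⟨rt k, Set.mem_univ _, rfl⟩)))
      · exact absurd (h ▸ hxn) (by intro hh; exact hh (Or.inr (Or.inr ⟨rt k, Set.mem_univ _, rfl⟩)))
    · rcases vB_union _ _ _ h1 with ⟨h2 | h2, -⟩
      · exact absurd (hU00b h2 ▸ hxn) (by intro hh; exact hh (Or.inl rfl))
      · exact absurd (hU01b h2 ▸ hxn) (by intro hh; exact hh (Or.inl rfl))
  -- border of X4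
  have hX4b : vertexBorder (qTree 2 (k+2)) X4 ⊆ {v1} := by
    intro x hx
    have hxn : x ∉ X4 := hx.1
    rw [hX4def, Set.insert_eq] at hx
    rcases vB_union _ _ _ hx with ⟨h1 | h1, -⟩
    · rcases border_root2 (h := k) h1 with h | h
      · exact absurd (h ▸ hxn) (by intro hh; exact hh (Or.inr (Or.inl rfl)))
      · exact h
    · exact absurd (hD0b h1 ▸ hxn) (by intro hh; exact hh (Or.inl rfl))
  -- sizes
  have hU00c : U00.ncard = M := by rw [hU00def, emb2_ncard, hMuniv]
  have hU01c : U01.ncard = M := by rw [hU01def, emb2_ncard, hMuniv]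
  have hU10c : U10.ncard = M := by rw [hU10def, emb2_ncard, hMuniv]
  have hUUc : (U00 ∪ U01).ncard = 2*M := by
    rw [Set.ncard_union_eq (emb2_disjoint (by decide) _ _) (Set.toFinite _) (Set.toFinite _),
      hU00c, hU01c]
    ring
  have hD0c : D0.ncard = 2*M + 1 := by
    rw [hD0def, Set.ncard_insert_of_notMem hv0U (Set.toFinite _), hUUc]
  have hX4c : X4.ncard = 2*M + 2 := by
    rw [hX4def, Set.ncard_insert_of_notMem hrtD0 (Set.toFinite _), hD0c]
  have hite : ∀ (c : Prop) (x : QV 2 (k+2)), (if h : c then ({x} : Set (QV 2 (k+2))) else ∅).ncard ≤ 1 := by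
    intro c x; split <;> simp
  -- CASE 1 : s ≤ M
  by_cases hc1 : s ≤ M
  · obtain ⟨P, hPc, hPb, hPb1⟩ := IHk s (by omega)
    have hsub := border_emb2 (h := k) 0 0 P
    have h1 : (vertexBorder (qTree 2 (k+2)) (emb2 0 0 '' P)).ncard
        ≤ (vertexBorder (qTree 2 k) P).ncard + (if rt k ∈ P then 1 else 0) := by
      calc (vertexBorder (qTree 2 (k+2)) (emb2 0 0 '' P)).ncard
          ≤ (emb2 0 0 '' (vertexBorder (qTree 2 k) P) ∪
              (if rt k ∈ P then ({(⟨[0], by simp⟩ : QV 2 (k+2))} : Set (QV 2 (k+2))) else ∅)).ncard :=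
            Set.ncard_le_ncard hsub (Set.toFinite _)
        _ ≤ (emb2 0 0 '' (vertexBorder (qTree 2 k) P)).ncard +
              (if rt k ∈ P then ({(⟨[0], by simp⟩ : QV 2 (k+2))} : Set (QV 2 (k+2))) else ∅).ncard :=
            Set.ncard_union_le _ _
        _ ≤ (vertexBorder (qTree 2 k) P).ncard + (if rt k ∈ P then 1 else 0) := by
            rw [emb2_ncard]
            gcongr
            split <;> simp <;> exact Set.subsingleton_singleton
    refine ⟨emb2 0 0 '' P, by rw [emb2_ncard, hPc], by omega, ?_⟩
    rw [if_neg (rt_not_mem_emb2 0 0 P)]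
    omega
  -- CASE 2 : M < s ≤ 2M
  by_cases hc2 : s ≤ 2*M
  · obtain ⟨P, hPc, hPb, hPb1⟩ := IHk (s - M) (by omega)
    have hdisj : Disjoint U00 (emb2 0 1 '' P) := emb2_disjoint (by decide) _ _
    have hsub : vertexBorder (qTree 2 (k+2)) (U00 ∪ emb2 0 1 '' P) ⊆
        {v0} ∪ emb2 0 1 '' (vertexBorder (qTree 2 k) P) := by
      intro x hx
      rcases vB_union' _ _ _ hx with h | h
      · exact Or.inl (hU00b h)
      · rcases border_emb2 (h := k) 0 1 P h with h' | h'
        · exact Or.inr h'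
        · left
          split at h'
          · exact h'
          · exact absurd h' (Set.notMem_empty x)
    have h1 : (vertexBorder (qTree 2 (k+2)) (U00 ∪ emb2 0 1 '' P)).ncard
        ≤ 1 + (vertexBorder (qTree 2 k) P).ncard := by
      calc (vertexBorder (qTree 2 (k+2)) (U00 ∪ emb2 0 1 '' P)).ncard
          ≤ ({v0} ∪ emb2 0 1 '' (vertexBorder (qTree 2 k) P)).ncard :=
            Set.ncard_le_ncard hsub (Set.toFinite _)
        _ ≤ ({v0} : Set (QV 2 (k+2))).ncard + (emb2 0 1 '' (vertexBorder (qTree 2 k) P)).ncard :=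
            Set.ncard_union_le _ _
        _ = 1 + (vertexBorder (qTree 2 k) P).ncard := by rw [Set.ncard_singleton, emb2_ncard]
    refine ⟨U00 ∪ emb2 0 1 '' P, ?_, by omega, ?_⟩
    · rw [Set.ncard_union_eq hdisj (Set.toFinite _) (Set.toFinite _), hU00c, emb2_ncard, hPc]
      omega
    · rw [if_neg (by rintro (h | h); exacts [rt_not_mem_emb2 0 0 _ h, rt_not_mem_emb2 0 1 _ h])]
      omega
  -- CASE 3 : s = 2M+1
  by_cases hc3 : s = 2*M + 1
  · have h1 : (vertexBorder (qTree 2 (k+2)) D0).ncard ≤ 1 := by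
      have := Set.ncard_le_ncard hD0b (Set.toFinite _)
      simpa using this
    exact ⟨D0, by rw [hD0c, hc3], by omega, by rw [if_neg hrtD0]; omega⟩
  -- CASE 5 : 2M+2 ≤ s ≤ 3M+2
  by_cases hc5 : s ≤ 3*M + 2
  · obtain ⟨P, hPc, hPb, hPb1⟩ := IHk (s - (2*M+2)) (by omega)
    have hdisj : Disjoint X4 (emb2 1 0 '' P) := by
      rw [Set.disjoint_left]
      rintro x (rfl | rfl | h | h) hmem
      · exact rt_not_mem_emb2 1 0 _ hmem
      · exact single_not_mem_emb2 0 1 0 _ (by simp) hmem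
      · exact Set.disjoint_left.mp (emb2_disjoint (by decide) Set.univ P) h hmem
      · exact Set.disjoint_left.mp (emb2_disjoint (by decide) Set.univ P) h hmem
    have hsub : vertexBorder (qTree 2 (k+2)) (X4 ∪ emb2 1 0 '' P) ⊆
        {v1} ∪ emb2 1 0 '' (vertexBorder (qTree 2 k) P) := by
      intro x hx
      rcases vB_union' _ _ _ hx with h | h
      · exact Or.inl (hX4b h)
      · rcases border_emb2 (h := k) 1 0 P h with h' | h'
        · exact Or.inr h'
        · left
          split at h'
          · exact h'
          · exact absurd h' (Set.notMem_empty x)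
    have h1 : (vertexBorder (qTree 2 (k+2)) (X4 ∪ emb2 1 0 '' P)).ncard
        ≤ 1 + (vertexBorder (qTree 2 k) P).ncard := by
      calc (vertexBorder (qTree 2 (k+2)) (X4 ∪ emb2 1 0 '' P)).ncard
          ≤ ({v1} ∪ emb2 1 0 '' (vertexBorder (qTree 2 k) P)).ncard :=
            Set.ncard_le_ncard hsub (Set.toFinite _)
        _ ≤ ({v1} : Set (QV 2 (k+2))).ncard + (emb2 1 0 '' (vertexBorder (qTree 2 k) P)).ncard :=
            Set.ncard_union_le _ _
        _ = 1 + (vertexBorder (qTree 2 k) P).ncard := by rw [Set.ncard_singleton, emb2_ncard]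
    refine ⟨X4 ∪ emb2 1 0 '' P, ?_, by omega, ?_⟩
    · rw [Set.ncard_union_eq hdisj (Set.toFinite _) (Set.toFinite _), hX4c, emb2_ncard, hPc]
      omega
    · rw [if_pos (Set.mem_union_left _ (Set.mem_insert _ _))]
      omega
  -- CASE 6 : 3M+2 < s ≤ 4M+2
  by_cases hc6 : s ≤ 4*M + 2
  · obtain ⟨P, hPc, hPb, hPb1⟩ := IHk (s - (3*M+2)) (by omega)
    have hdisj1 : Disjoint X4 U10 := by
      rw [Set.disjoint_left]
      rintro x (rfl | rfl | h | h) hmem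
      · exact rt_not_mem_emb2 1 0 _ hmem
      · exact single_not_mem_emb2 0 1 0 _ (by simp) hmem
      · exact Set.disjoint_left.mp (emb2_disjoint (by decide) Set.univ Set.univ) h hmem
      · exact Set.disjoint_left.mp (emb2_disjoint (by decide) Set.univ Set.univ) h hmem
    have hdisj2 : Disjoint (X4 ∪ U10) (emb2 1 1 '' P) := by
      rw [Set.disjoint_union_left]
      constructor
      · rw [Set.disjoint_left]
        rintro x (rfl | rfl | h | h) hmem
        · exact rt_not_mem_emb2 1 1 _ hmem
        · exact single_not_mem_emb2 0 1 1 _ (by simp) hmem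
        · exact Set.disjoint_left.mp (emb2_disjoint (by decide) Set.univ P) h hmem
        · exact Set.disjoint_left.mp (emb2_disjoint (by decide) Set.univ P) h hmem
      · exact emb2_disjoint (by decide) _ _
    have hsub : vertexBorder (qTree 2 (k+2)) ((X4 ∪ U10) ∪ emb2 1 1 '' P) ⊆
        {v1} ∪ emb2 1 1 '' (vertexBorder (qTree 2 k) P) := by
      intro x hx
      rcases vB_union' _ _ _ hx with h | h
      · rcases vB_union' _ _ _ h with h2 | h2
        · exact Or.inl (hX4b h2)
        · exact Or.inl (hU10b h2)
      · rcases border_emb2 (h := k) 1 1 P h with h' | h'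
        · exact Or.inr h'
        · left
          split at h'
          · exact h'
          · exact absurd h' (Set.notMem_empty x)
    have h1 : (vertexBorder (qTree 2 (k+2)) ((X4 ∪ U10) ∪ emb2 1 1 '' P)).ncard
        ≤ 1 + (vertexBorder (qTree 2 k) P).ncard := by
      calc (vertexBorder (qTree 2 (k+2)) ((X4 ∪ U10) ∪ emb2 1 1 '' P)).ncard
          ≤ ({v1} ∪ emb2 1 1 '' (vertexBorder (qTree 2 k) P)).ncard :=
            Set.ncard_le_ncard hsub (Set.toFinite _)
        _ ≤ ({v1} : Set (QV 2 (k+2))).ncard + (emb2 1 1 '' (vertexBorder (qTree 2 k) P)).ncard :=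
            Set.ncard_union_le _ _
        _ = 1 + (vertexBorder (qTree 2 k) P).ncard := by rw [Set.ncard_singleton, emb2_ncard]
    refine ⟨(X4 ∪ U10) ∪ emb2 1 1 '' P, ?_, by omega, ?_⟩
    · rw [Set.ncard_union_eq hdisj2 (Set.toFinite _) (Set.toFinite _),
        Set.ncard_union_eq hdisj1 (Set.toFinite _) (Set.toFinite _), hX4c, hU10c, emb2_ncard, hPc]
      omega
    · rw [if_pos (Set.mem_union_left _ (Set.mem_union_left _ (Set.mem_insert _ _)))]
      omega
  -- CASE 7 : s = 4M+3
  · have hs7 : s = 4*M + 3 := by omega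
    refine ⟨Set.univ, ?_, by simp [vB_univ], by simp [vB_univ]⟩
    rw [Set.ncard_univ, card_qv]
    omega

end QV

namespace QV

theorem ub_main : ∀ h s : ℕ, s ≤ 2^(h+1) - 1 →
    ∃ S : Set (QV 2 h), S.ncard = s ∧
      (vertexBorder (qTree 2 h) S).ncard ≤ (h+1)/2 ∧
      (vertexBorder (qTree 2 h) S).ncard + (if rt h ∈ S then 1 else 0) ≤ (h+1)/2 + 1 := by
  intro h
  induction h using Nat.strong_induction_on with
  | _ h IH =>
  match h with
  | 0 =>
    intro s hs
    have hs1 : s ≤ 1 := by simpa using hs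
    interval_cases s
    · exact ⟨∅, by simp, by simp [vB_empty], by simp [vB_empty]⟩
    · refine ⟨Set.univ, ?_, by simp [vB_univ], by simp [vB_univ]⟩
      rw [Set.ncard_univ, card_qv]
      norm_num
  | 1 =>
    intro s hs
    have hs1 : s ≤ 3 := by norm_num at hs; omega
    have hl0 : ([0] : List (Fin 2)).length ≤ 1 := by simp
    have hl1 : ([1] : List (Fin 2)).length ≤ 1 := by simp
    set l0 : QV 2 1 := ⟨[0], hl0⟩ with hl0def
    set l1 : QV 2 1 := ⟨[1], hl1⟩ with hl1def
    have hbs : ∀ (c : Fin 2) (hp : ([c] : List (Fin 2)).length ≤ 1),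
        vertexBorder (qTree 2 1) {(⟨[c], hp⟩ : QV 2 1)} ⊆ {rt 1} := by
      rintro c hp x ⟨hx, y, rfl, hadj⟩
      rcases hadj with ⟨i, hxy⟩ | ⟨i, hyx⟩
      · exfalso
        have := x.property
        rw [hxy] at this
        simp at this
      · rcases hxl : x.val with _ | ⟨a, l⟩
        · exact Subtype.ext (by rw [hxl]; rfl)
        · exfalso
          rw [hxl] at hyx
          have := congrArg List.length hyx
          simp at this
    have hb0 : vertexBorder (qTree 2 1) {l0} ⊆ {rt 1} := hbs 0 hl0
    have hb1 : vertexBorder (qTree 2 1) {l1} ⊆ {rt 1} := hbs 1 hl1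
    have hrt0 : rt 1 ∉ ({l0} : Set (QV 2 1)) := by
      simp only [Set.mem_singleton_iff]
      intro hh
      exact absurd (congrArg (fun v : QV 2 1 => v.val) hh) (by simp [rt, hl0def])
    have hrt01 : rt 1 ∉ ({l0, l1} : Set (QV 2 1)) := by
      simp only [Set.mem_insert_iff, Set.mem_singleton_iff]
      rintro (hh | hh)
      · exact absurd (congrArg (fun v : QV 2 1 => v.val) hh) (by simp [rt, hl0def])
      · exact absurd (congrArg (fun v : QV 2 1 => v.val) hh) (by simp [rt, hl1def])
    have hne01 : l0 ≠ l1 := by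
      intro hh
      exact absurd (congrArg (fun v : QV 2 1 => v.val) hh) (by simp [hl0def, hl1def])
    interval_cases s
    · exact ⟨∅, by simp, by simp [vB_empty], by simp [vB_empty]⟩
    · refine ⟨{l0}, by simp, ?_, ?_⟩
      · have := Set.ncard_le_ncard hb0 (Set.toFinite _)
        simpa using this
      · have := Set.ncard_le_ncard hb0 (Set.toFinite _)
        rw [if_neg hrt0]
        simp at this ⊢
        rw [← Set.ncard_le_one_iff_subsingleton] at this
        omega
    · refine ⟨{l0, l1}, ?_, ?_, ?_⟩
      · exact Set.ncard_pair hne01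
      · have hsub : vertexBorder (qTree 2 1) {l0, l1} ⊆ {rt 1} := by
          rw [Set.insert_eq]
          exact (vB_union' (qTree 2 1) _ _).trans (Set.union_subset hb0 hb1)
        have := Set.ncard_le_ncard hsub (Set.toFinite _)
        simpa using this
      · have hsub : vertexBorder (qTree 2 1) {l0, l1} ⊆ {rt 1} := by
          rw [Set.insert_eq]
          exact (vB_union' (qTree 2 1) _ _).trans (Set.union_subset hb0 hb1)
        have := Set.ncard_le_ncard hsub (Set.toFinite _)
        rw [if_neg hrt01]
        simp at this ⊢
        rw [← Set.ncard_le_one_iff_subsingleton] at this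
        omega
    · refine ⟨Set.univ, ?_, by simp [vB_univ], by simp [vB_univ]⟩
      rw [Set.ncard_univ, card_qv]
      norm_num
  | (k+2) => exact ub_step k (IH k (by omega))

end QV

namespace QV

lemma upper_peak (d : ℕ) : isoPeak (qTree 2 d) ≤ (d+1)/2 := by
  apply csSup_le
  · exact ⟨isoProfile (qTree 2 d) 0, 0, Set.mem_Icc.mpr ⟨le_refl 0, Nat.zero_le _⟩, rfl⟩
  · rintro x ⟨s, hmem, rfl⟩
    have hsle : s ≤ Nat.card (QV 2 d) := (Set.mem_Icc.mp hmem).2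
    have hsN : s ≤ 2^(d+1) - 1 := by rw [card_qv] at hsle; exact hsle
    obtain ⟨S, hSc, hSb, -⟩ := ub_main d s hsN
    have h1 : isoProfile (qTree 2 d) s ≤ (vertexBorder (qTree 2 d) S).ncard :=
      Nat.sInf_le ⟨S, hSc, rfl⟩
    omega

end QV

theorem binary_tree_iso_peak_bounds' (d : ℕ) (hd : 1 ≤ d) :
    ((d : ℝ) - Real.logb 2 d - 3 - Real.logb 2 3) / 2 ≤ (isoPeak (qTree 2 d) : ℝ) ∧
    (isoPeak (qTree 2 d) : ℝ) ≤ (⌈(d : ℝ) / 2⌉ : ℤ) := by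
  constructor
  · exact QV.lower_peak hd
  · have hub : isoPeak (qTree 2 d) ≤ (d+1)/2 := QV.upper_peak d
    have h2 : ((isoPeak (qTree 2 d) : ℝ)) ≤ (((d+1)/2 : ℕ) : ℝ) := by exact_mod_cast hub
    have h3 : (((d+1)/2 : ℕ) : ℤ) ≤ ⌈(d:ℝ)/2⌉ := by
      rw [Int.le_ceil_iff]
      have h4 : 2 * ((d+1)/2) ≤ d + 1 := by omega
      have h5 : (2 * ((d+1)/2 : ℕ) : ℝ) ≤ (d:ℝ) + 1 := by exact_mod_cast h4
      rw [Int.cast_natCast]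
      push_cast at h5
      linarith
    have h6 : ((((d+1)/2 : ℕ) : ℤ) : ℝ) ≤ ((⌈(d:ℝ)/2⌉ : ℤ) : ℝ) := by exact_mod_cast h3
    calc (isoPeak (qTree 2 d) : ℝ) ≤ (((d+1)/2 : ℕ) : ℝ) := h2
    _ ≤ ((⌈(d:ℝ)/2⌉ : ℤ) : ℝ) := by
        rw [Int.cast_natCast] at h6
        exact h6

theorem binary_tree_iso_peak_bounds (d : ℕ) (hd : 1 ≤ d) :
    ((d : ℝ) - Real.logb 2 d - 3 - Real.logb 2 3) / 2 ≤ (isoPeak (qTree 2 d) : ℝ) ∧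
    (isoPeak (qTree 2 d) : ℝ) ≤ (⌈(d : ℝ) / 2⌉ : ℤ) :=
  binary_tree_iso_peak_bounds' d hd
end

section
/- Let q ∈ {3,4}, let d ≥ 1 be an integer, and let T be the complete q-ary tree of depth d. Then Φ_V(T) ≥ d − log_q(d) − (log_q(2) + 1). -/
open scoped Classical

namespace IsoWalk


/-- Bernoulli-type bound. -/
lemma bern (q K : ℕ) (hq : 1 ≤ q) : (q-1)*K + 1 ≤ q^K := by
  induction K with
  | zero => simp
  | succ n ih =>
    have h2 : 1 ≤ q^n := Nat.one_le_pow _ _ (by omega)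
    have h1 : q^(n+1) = q^n * q := by ring
    have : (q-1)*(n+1) + 1 = ((q-1)*n + 1) + (q-1) := by ring
    rw [this, h1]
    have hqq : q - 1 + 1 = q := by omega
    nlinarith [ih]

/-- pow dominates linear : s + 1 ≤ q ^ s -/
lemma pow_ge_succ (q s : ℕ) (hq : 2 ≤ q) : s + 1 ≤ q^s := by
  have := bern q s (by omega)
  have : (q-1)*s + 1 ≤ q^s := this
  have hs : s ≤ (q-1)*s := Nat.le_mul_of_pos_left s (by omega)
  omega

/-- key: for 1 ≤ K ≤ L : q^(L+1-K) + q*((q-1)*K) ≤ q^(L+1) -/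
lemma keynat (q L K : ℕ) (hq : 3 ≤ q) (hK : 1 ≤ K) (hKL : K ≤ L) :
    q^(L+1-K) + q*((q-1)*K) ≤ q^(L+1) := by
  have hsplit : q^(L+1-K) * q^K = q^(L+1) := by
    rw [← pow_add]; congr 1; omega
  have hb : (q-1)*K + 1 ≤ q^K := bern q K (by omega)
  have hqle : q ≤ q^(L+1-K) := by
    calc q = q^1 := (pow_one q).symm
    _ ≤ q^(L+1-K) := Nat.pow_le_pow_right (by omega) (by omega)
  have h1 : q*((q-1)*K) ≤ q^(L+1-K) * ((q-1)*K) :=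
    Nat.mul_le_mul_right _ hqle
  calc q^(L+1-K) + q*((q-1)*K) ≤ q^(L+1-K) + q^(L+1-K) * ((q-1)*K) := by omega
  _ = q^(L+1-K) * ((q-1)*K + 1) := by ring
  _ ≤ q^(L+1-K) * q^K := Nat.mul_le_mul_left _ hb
  _ = q^(L+1) := hsplit

/-- Main single-step log lemma. -/
lemma lmain (q : ℕ) (hq : 3 ≤ q) (x y E : ℤ) (K : ℕ)
    (hx : x ≠ 0) (hy : y ≠ 0) (hrec : y = q*x + ((q:ℤ)-1)*E)
    (hE : E.natAbs ≤ q*K) :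
    Nat.log q x.natAbs + 1 ≤ Nat.log q y.natAbs + K := by
  rcases Nat.eq_zero_or_pos K with hK0 | hKpos
  · subst hK0
    have hE0 : E = 0 := by
      have : E.natAbs = 0 := by omega
      omega
    subst hE0
    have : y = q * x := by rw [hrec]; ring
    have hn : y.natAbs = x.natAbs * q := by
      rw [this, Int.natAbs_mul]; simp [Int.natAbs_natCast, Nat.mul_comm]
    rw [hn, Nat.log_mul_base (by omega) (by simpa using hx)]
  · set L := Nat.log q x.natAbs with hL
    rcases le_or_gt K L with hKL | hLK
    · -- y.natAbs ≥ q^(L+1-K)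
      have hxL : q^L ≤ x.natAbs := Nat.pow_log_le_self q (by simpa using hx)
      have htri : q * x.natAbs ≤ y.natAbs + (q-1) * E.natAbs := by
        have h1 : (q:ℤ) * x = y - ((q:ℤ)-1)*E := by rw [hrec]; ring
        have h2 : ((q:ℤ) * x).natAbs ≤ y.natAbs + (((q:ℤ)-1)*E).natAbs := by
          rw [h1]; exact (Int.natAbs_sub_le _ _).trans (by simp)
        have h3 : ((q:ℤ)*x).natAbs = q * x.natAbs := by
          rw [Int.natAbs_mul]; simp
        have h4 : (((q:ℤ)-1)*E).natAbs = (q-1) * E.natAbs := by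
          rw [Int.natAbs_mul]
          congr 1
          have : ((q:ℤ) - 1) = ((q - 1 : ℕ) : ℤ) := by push_cast; omega
          rw [this, Int.natAbs_natCast]
        omega
      have hkey := keynat q L K hq hKpos hKL
      have hpow : q^(L+1) ≤ q * x.natAbs := by
        calc q^(L+1) = q * q^L := by ring
        _ ≤ q * x.natAbs := Nat.mul_le_mul_left _ hxL
      have hEbound : (q-1) * E.natAbs ≤ (q-1)*(q*K) := Nat.mul_le_mul_left _ hE
      have hmul : (q-1)*(q*K) = q*((q-1)*K) := by ring
      have hylow : q^(L+1-K) ≤ y.natAbs := by omega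
      have : L + 1 - K ≤ Nat.log q y.natAbs :=
        (Nat.le_log_iff_pow_le (by omega) (by simpa using hy)).mpr hylow
      omega
    · have : (0:ℕ) ≤ Nat.log q y.natAbs := Nat.zero_le _
      omega

lemma pow_pred_ge (q s : ℕ) (hq : 2 ≤ q) (hs : 1 ≤ s) : s ≤ q^(s-1) := by
  have := pow_ge_succ q (s-1) hq
  omega

lemma log_step_up (q : ℕ) (hq : 3 ≤ q) (nx ny : ℕ) (hnx : nx ≠ 0) (hny : ny ≠ 0)
    (h : q * nx ≤ ny) : Nat.log q nx + 1 ≤ Nat.log q ny := by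
  have h2 : q^(Nat.log q nx + 1) ≤ ny := by
    have h3 := Nat.pow_log_le_self q hnx
    calc q^(Nat.log q nx + 1) = q * q^(Nat.log q nx) := by ring
    _ ≤ q * nx := Nat.mul_le_mul_left _ h3
    _ ≤ ny := h
  exact (Nat.le_log_iff_pow_le (by omega) hny).mpr h2

/-- Pair lemma: a negative step followed by a positive step. -/
lemma lpair (q : ℕ) (hq : 3 ≤ q) (x y z F E : ℤ) (K K' : ℕ)
    (hx : x ≠ 0) (hy : y ≠ 0) (hz : z ≠ 0)
    (hyrec : y = q*x - ((q:ℤ)-1)*F) (hzrec : z = q*y + ((q:ℤ)-1)*E)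
    (hF : 1 ≤ F) (hE : 1 ≤ E) (hFK : F.toNat ≤ K) (hEK' : E.toNat ≤ q*K') :
    Nat.log q x.natAbs + 2 ≤ Nat.log q z.natAbs + max K' K := by
  have hq1 : (1:ℤ) ≤ (q:ℤ) - 1 := by
    have : (3:ℤ) ≤ (q:ℤ) := by exact_mod_cast hq
    omega
  have hqZ : (0:ℤ) < (q:ℤ) := by exact_mod_cast (by omega : 0 < q)
  have hK1 : 1 ≤ K := by omega
  have hFpos : (0:ℤ) < ((q:ℤ)-1) * F := by positivity
  have hEpos : (0:ℤ) < ((q:ℤ)-1) * E := by positivity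
  rcases lt_trichotomy x 0 with hxneg | hx0 | hxpos
  · -- x < 0
    have hqx : (q:ℤ) * x < 0 := mul_neg_of_pos_of_neg hqZ hxneg
    have hyval : y ≤ q * x := by linarith [hyrec.le, hyrec.ge]
    have habs : q * x.natAbs ≤ y.natAbs := by
      have hxa : (x.natAbs:ℤ) = -x := by omega
      have hya : (y.natAbs:ℤ) = -y := by omega
      have h5 : (q:ℤ) * (x.natAbs:ℤ) ≤ (y.natAbs:ℤ) := by
        rw [hxa, hya]
        have : (q:ℤ) * -x = -((q:ℤ)*x) := by ring
        rw [this]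
        linarith
      exact_mod_cast h5
    have hlogy := log_step_up q hq x.natAbs y.natAbs (by simpa using hx) (by simpa using hy) habs
    have := lmain q hq y z E K' hy hz hzrec (by omega)
    have hmax : K' ≤ max K' K := le_max_left _ _
    omega
  · exact absurd hx0 hx
  · -- x > 0
    set Lx := Nat.log q x.natAbs with hLx
    have hxa : q^Lx ≤ x.natAbs := Nat.pow_log_le_self q (by simpa using hx)
    have hxZ : (q:ℤ)^Lx ≤ x := by
      have h2 : (x.natAbs:ℤ) = x := by omega
      have h1 : ((q^Lx : ℕ) : ℤ) ≤ x := by rw [← h2]; exact_mod_cast hxa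
      exact_mod_cast h1
    have hpowpos : (0:ℤ) < (q:ℤ)^Lx := by positivity
    have hLxpow : (Lx:ℤ) + 1 ≤ (q:ℤ)^Lx := by
      have := pow_ge_succ q Lx (by omega)
      exact_mod_cast this
    have hqmul : (q:ℤ) * (q:ℤ)^Lx ≤ (q:ℤ) * x := mul_le_mul_of_nonneg_left hxZ (le_of_lt hqZ)
    rcases lt_trichotomy y 0 with hyneg | hy0 | hypos
    · -- x > 0, y < 0 : F ≥ Lx + 2
      have hgF : (q:ℤ) * (q:ℤ)^Lx + 1 ≤ ((q:ℤ)-1) * F := by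
        have h1 : ((q:ℤ)-1)*F = q*x - y := by rw [hyrec]; ring
        rw [h1]; linarith
      have hFge : (Lx : ℤ) + 2 ≤ F := by
        rcases Nat.eq_zero_or_pos Lx with h0 | hpos
        · have hp0 : ((q:ℤ))^Lx = 1 := by rw [h0]; ring
          rw [hp0] at hgF
          by_contra hcon
          push_neg at hcon
          have hF1 : F ≤ 1 := by
            rw [h0] at hcon; push_cast at hcon; omega
          have h7 : ((q:ℤ)-1)*F ≤ ((q:ℤ)-1)*1 := by
            apply mul_le_mul_of_nonneg_left hF1 (by linarith)
          linarith
        · have hpow1 : (Lx:ℤ) ≤ (q:ℤ)^(Lx-1) := by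
            have := pow_pred_ge q Lx (by omega) hpos
            exact_mod_cast this
          have hq2 : ((q:ℤ))^(Lx+1) = q^2 * q^(Lx-1) := by
            rw [← pow_add]; congr 1; omega
          have hsq : ((q:ℤ))^2 * Lx ≤ (q:ℤ)^(Lx+1) := by
            rw [hq2]
            apply mul_le_mul_of_nonneg_left hpow1 (by positivity)
          have hq3 : (3:ℤ) ≤ (q:ℤ) := by exact_mod_cast hq
          have hL1 : (1:ℤ) ≤ (Lx:ℤ) := by exact_mod_cast hpos
          have e2 : (0:ℤ) ≤ (q:ℤ)^2 - 3*q + 4 := by nlinarith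
          have e1 : (0:ℤ) ≤ ((Lx:ℤ) - 1) * ((q:ℤ)^2 - q + 1) := by
            apply mul_nonneg (by linarith) (by nlinarith)
          have id1 : (q:ℤ)^2*(Lx:ℤ) + 1 - ((q:ℤ)-1)*((Lx:ℤ)+2)
              = ((Lx:ℤ)-1)*((q:ℤ)^2-q+1) + ((q:ℤ)^2-3*q+4) := by ring
          have hkey : ((q:ℤ)-1)*((Lx:ℤ)+2) ≤ (q:ℤ)^(Lx+1) + 1 := by
            linarith [e1, e2, hsq, id1]
          have hp : (q:ℤ) * (q:ℤ)^Lx = (q:ℤ)^(Lx+1) := by ring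
          rw [hp] at hgF
          have h6 : ((q:ℤ)-1)*((Lx:ℤ)+2) ≤ ((q:ℤ)-1)*F := by linarith
          have h8 : (0:ℤ) < (q:ℤ)-1 := by linarith
          exact le_of_mul_le_mul_left h6 h8
      have hKge : Lx + 2 ≤ K := by omega
      have h9 : K ≤ max K' K := le_max_right _ _
      have h10 : (0:ℕ) ≤ Nat.log q z.natAbs := Nat.zero_le _
      omega
    · exact absurd hy0 hy
    · -- x > 0, y > 0
      set Ly := Nat.log q y.natAbs with hLy
      rcases le_or_gt Lx Ly with hle | hlt
      · have hzpos : (0:ℤ) < z := by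
          have : (0:ℤ) < (q:ℤ)*y := mul_pos hqZ hypos
          linarith [hzrec.ge, hzrec.le]
        have hzy : q * y.natAbs ≤ z.natAbs := by
          have h1 : (q:ℤ)*y ≤ z := by
            have : z - (q:ℤ)*y = ((q:ℤ)-1)*E := by rw [hzrec]; ring
            linarith
          have h2 : (y.natAbs:ℤ) = y := by omega
          have h3 : (z.natAbs:ℤ) = z := by omega
          have h5 : (q:ℤ) * (y.natAbs:ℤ) ≤ (z.natAbs:ℤ) := by rw [h2, h3]; exact h1
          exact_mod_cast h5
        have hlz := log_step_up q hq y.natAbs z.natAbs (by simpa using hy) (by simpa using hz) hzy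
        have h9 : K ≤ max K' K := le_max_right _ _
        omega
      · -- Ly < Lx
        have hya : y.natAbs < q^(Ly+1) := Nat.lt_pow_succ_log_self (by omega : 1 < q) y.natAbs
        have hyZ : y ≤ (q:ℤ)^(Ly+1) - 1 := by
          have h2 : (y.natAbs:ℤ) = y := by omega
          have h1 : y < ((q^(Ly+1) : ℕ) : ℤ) := by rw [← h2]; exact_mod_cast hya
          have h4 : ((q^(Ly+1) : ℕ) : ℤ) = (q:ℤ)^(Ly+1) := by push_cast; ring
          omega
        have hpowmono : (q:ℤ)^(Ly+1) ≤ (q:ℤ)^Lx := by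
          apply pow_le_pow_right₀ (by exact_mod_cast (by omega : 1 ≤ q))
          omega
        have hgF : ((q:ℤ)-1) * (q:ℤ)^Lx + 1 ≤ ((q:ℤ)-1)*F := by
          have h1 : ((q:ℤ)-1)*F = q*x - y := by rw [hyrec]; ring
          have id2 : (q:ℤ) * (q:ℤ)^Lx - (q:ℤ)^Lx = ((q:ℤ)-1) * (q:ℤ)^Lx := by ring
          rw [h1]; linarith
        have hFgeZ : (q:ℤ)^Lx + 1 ≤ F := by
          have h6 : ((q:ℤ)-1)*(q:ℤ)^Lx < ((q:ℤ)-1)*F := by linarith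
          have h7 : (q:ℤ)^Lx < F := lt_of_mul_lt_mul_left h6 (by linarith)
          exact Int.add_one_le_iff.mpr h7
        have hKbig : Lx + 2 ≤ K := by
          have : (Lx:ℤ) + 2 ≤ F := by omega
          omega
        have h9 : K ≤ max K' K := le_max_right _ _
        have h10 : (0:ℕ) ≤ Nat.log q z.natAbs := Nat.zero_le _
        omega


def eI (q : ℕ) (a : ℕ → ℕ) (j : ℕ) : ℤ := (a (j+1) : ℤ) - (q:ℤ) * (a j : ℤ)
def wI (q : ℕ) (a : ℕ → ℕ) (j : ℕ) : ℤ := ((q:ℤ) - 1) * (a j : ℤ) - (q:ℤ)^j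
def Aa (q : ℕ) (a : ℕ → ℕ) (j : ℕ) : ℕ := ((eI q a j).toNat + q - 1) / q
def Bb (q : ℕ) (a : ℕ → ℕ) (j : ℕ) : ℕ := (-(eI q a j)).toNat
def mm (q d : ℕ) (a : ℕ → ℕ) (k : ℕ) : ℕ :=
  max (if k < d then Aa q a k else 0) (if k = 0 then 0 else Bb q a (k-1))
def Φf (q : ℕ) (a : ℕ → ℕ) (j : ℕ) : ℕ := Nat.log q (wI q a j).natAbs

section Walk

variable (q d : ℕ) (a c : ℕ → ℕ)

lemma sum_Icc_step {M : Type*} [AddCommMonoid M] (f : ℕ → M) (lo hi : ℕ) (h : lo ≤ hi) :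
    ∑ k ∈ Finset.Icc lo hi, f k = f lo + ∑ k ∈ Finset.Icc (lo+1) hi, f k := by
  have hins : Finset.Icc lo hi = insert lo (Finset.Icc (lo+1) hi) := by
    ext x; simp [Finset.mem_Icc, Finset.mem_insert]; omega
  rw [hins, Finset.sum_insert (by simp [Finset.mem_Icc])]

lemma w_rec (j : ℕ) : wI q a (j+1) = q * wI q a j + ((q:ℤ)-1) * eI q a j := by
  unfold wI eI
  push_cast
  ring

lemma w_ne (hq : 3 ≤ q) (j : ℕ) : wI q a j ≠ 0 := by
  unfold wI
  intro h
  have hcast : ((q:ℤ) - 1) = ((q - 1 : ℕ) : ℤ) := by push_cast; omega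
  have h2 : ((q-1) * a j : ℕ) = (q^j : ℕ) := by
    have : (((q-1) * a j : ℕ) : ℤ) = ((q^j : ℕ) : ℤ) := by push_cast [← hcast]; linarith
    exact_mod_cast this
  have hmod1 : q % (q-1) = 1 := by
    have e1 : q = (q-1) * 1 + 1 := by omega
    calc q % (q-1) = ((q-1) * 1 + 1) % (q-1) := by rw [← e1]
    _ = 1 % (q-1) := by rw [Nat.mul_add_mod]
    _ = 1 := Nat.mod_eq_of_lt (by omega)
  have hpow : q^j % (q-1) = 1 := by
    rw [Nat.pow_mod, hmod1, one_pow, Nat.mod_eq_of_lt (by omega)]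
  have hmul : ((q-1) * a j) % (q-1) = 0 := by
    simp [Nat.mul_mod_right]
  rw [h2] at hmul
  omega

lemma e_toNat_le (hq : 3 ≤ q) (h2 : ∀ j < d, a (j+1) ≤ q * (a j + c j)) (j : ℕ) (hj : j < d) :
    (eI q a j).toNat ≤ q * c j := by
  have := h2 j hj
  unfold eI
  have hz : (a (j+1) : ℤ) ≤ (q:ℤ) * (a j + c j) := by exact_mod_cast this
  have : (a (j+1) : ℤ) - q * a j ≤ (q:ℤ) * c j := by push_cast at hz ⊢; linarith
  omega

lemma Bb_le (h1 : ∀ j < d, q * a j ≤ a (j+1) + c (j+1)) (j : ℕ) (hj : j < d) :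
    Bb q a j ≤ c (j+1) := by
  have := h1 j hj
  unfold Bb eI
  have hz : (q:ℤ) * a j ≤ (a (j+1) : ℤ) + c (j+1) := by exact_mod_cast this
  omega

lemma Aa_le (hq : 3 ≤ q) (h2 : ∀ j < d, a (j+1) ≤ q * (a j + c j)) (j : ℕ) (hj : j < d) :
    Aa q a j ≤ c j := by
  have ht := e_toNat_le q d a c hq h2 j hj
  unfold Aa
  have : (eI q a j).toNat + q - 1 < (c j + 1) * q := by
    have : (c j + 1) * q = q * c j + q := by ring
    omega
  have := Nat.div_lt_iff_lt_mul (show 0 < q by omega) |>.mpr this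
  omega

lemma e_le_qAa (hq : 3 ≤ q) (j : ℕ) : (eI q a j).toNat ≤ q * Aa q a j := by
  unfold Aa
  set t := (eI q a j).toNat
  have hmod := Nat.div_add_mod (t + q - 1) q
  have hlt : (t + q - 1) % q < q := Nat.mod_lt _ (by omega)
  omega

lemma Aa_zero_of_nonpos (hq : 3 ≤ q) (j : ℕ) (h : eI q a j ≤ 0) : Aa q a j = 0 := by
  unfold Aa
  have : (eI q a j).toNat = 0 := by omega
  rw [this]
  exact Nat.div_eq_of_lt (by omega)

lemma Aa_le_mm (j : ℕ) (hj : j < d) : Aa q a j ≤ mm q d a j := by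
  unfold mm
  rw [if_pos hj]
  exact le_max_left _ _

lemma Bb_le_mm (j : ℕ) : Bb q a j ≤ mm q d a (j+1) := by
  unfold mm
  have : ¬(j + 1 = 0) := by omega
  rw [if_neg this]
  simp

lemma mm_le_c (hq : 3 ≤ q)
    (h1 : ∀ j < d, q * a j ≤ a (j+1) + c (j+1))
    (h2 : ∀ j < d, a (j+1) ≤ q * (a j + c j)) (k : ℕ) (hk : k ≤ d) :
    mm q d a k ≤ c k := by
  unfold mm
  apply max_le
  · split
    · exact Aa_le q d a c hq h2 k (by assumption)
    · exact Nat.zero_le _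
  · split
    · exact Nat.zero_le _
    · rename_i hk0
      obtain ⟨i, rfl⟩ : ∃ i, k = i + 1 := ⟨k - 1, by omega⟩
      simpa using Bb_le q d a c h1 i (by omega)

lemma claim_ind (hq : 3 ≤ q) :
    ∀ n j, j + n = d →
      (d - j) + Φf q a j ≤ Φf q a d + (if j < d then Aa q a j else 0)
        + ∑ k ∈ Finset.Icc (j+1) d, mm q d a k := by
  have hwne : ∀ j, wI q a j ≠ 0 := w_ne q a hq
  have hwabs : ∀ j, (wI q a j).natAbs ≠ 0 := fun j => by
    simpa using hwne j
  intro n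
  induction n using Nat.strong_induction_on with
  | _ n IH =>
    intro j hj
    rcases Nat.eq_zero_or_pos n with h0 | hpos
    · subst h0
      have hjd : j = d := by omega
      subst hjd
      rw [if_neg (by omega), Finset.Icc_eq_empty (by omega)]
      simp
    · have hjlt : j < d := by omega
      have hstep1 : ∑ k ∈ Finset.Icc (j+1) d, mm q d a k
          = mm q d a (j+1) + ∑ k ∈ Finset.Icc ((j+1)+1) d, mm q d a k :=
        sum_Icc_step _ _ _ (by omega)
      have hifm : (if j+1 < d then Aa q a (j+1) else 0) ≤ mm q d a (j+1) := by
        split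
        · exact Aa_le_mm q d a (j+1) (by assumption)
        · exact Nat.zero_le _
      rcases lt_trichotomy (eI q a j) 0 with hneg | hzero | hposcase
      · -- negative step
        by_cases hpair : j + 1 < d ∧ 0 < eI q a (j+1)
        · -- PAIR
          obtain ⟨hj1d, hpos1⟩ := hpair
          have hn2 : 2 ≤ n := by omega
          have hIH := IH (n-2) (by omega) (j+2) (by omega)
          have hlp := lpair q hq (wI q a j) (wI q a (j+1)) (wI q a (j+2))
            (-(eI q a j)) (eI q a (j+1)) (Bb q a j) (Aa q a (j+1))
            (hwne j) (hwne (j+1)) (hwne (j+2))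
            (by rw [w_rec]; ring)
            (by rw [w_rec])
            (by omega) (by omega)
            (le_refl _)
            (by
              have := e_le_qAa q a hq (j+1)
              omega)
          have hmm1 : max (Aa q a (j+1)) (Bb q a j) = mm q d a (j+1) := by
            unfold mm
            rw [if_pos hj1d, if_neg (by omega : ¬(j+1 = 0))]
            simp
          have hlp' : Φf q a j + 2 ≤ Φf q a (j+2) + mm q d a (j+1) := by
            rw [← hmm1]; exact hlp
          have hstep2 : ∑ k ∈ Finset.Icc ((j+1)+1) d, mm q d a k
              = mm q d a (j+2) + ∑ k ∈ Finset.Icc ((j+2)+1) d, mm q d a k :=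
            sum_Icc_step _ _ _ (by omega)
          have hifm2 : (if j+2 < d then Aa q a (j+2) else 0) ≤ mm q d a (j+2) := by
            split
            · exact Aa_le_mm q d a (j+2) (by assumption)
            · exact Nat.zero_le _
          omega
        · -- UNPAIRED NEG
          have hIH := IH (n-1) (by omega) (j+1) (by omega)
          have hlm := lmain q hq (wI q a j) (wI q a (j+1)) (eI q a j) (Bb q a j)
            (hwne j) (hwne (j+1)) (w_rec q a j)
            (by
              unfold Bb
              have h1 : (eI q a j).natAbs = (-(eI q a j)).toNat := by omega
              rw [h1]
              exact Nat.le_mul_of_pos_left _ (by omega))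
          have hB0 : Bb q a j + (if j+1 < d then Aa q a (j+1) else 0) ≤ mm q d a (j+1) := by
            by_cases hj1 : j + 1 < d
            · have he1 : eI q a (j+1) ≤ 0 := by
                by_contra hcon
                push_neg at hcon
                exact hpair ⟨hj1, hcon⟩
              rw [if_pos hj1, Aa_zero_of_nonpos q a hq (j+1) he1]
              unfold mm
              rw [if_neg (by omega : ¬(j+1 = 0))]
              simp
            · rw [if_neg hj1]
              simpa using Bb_le_mm q d a j
          have hlm' : Φf q a j + 1 ≤ Φf q a (j+1) + Bb q a j := hlm
          omega
      · -- free step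
        have hIH := IH (n-1) (by omega) (j+1) (by omega)
        have hfree : wI q a (j+1) = q * wI q a j := by
          rw [w_rec, hzero]; ring
        have hΦ : Φf q a (j+1) = Φf q a j + 1 := by
          unfold Φf
          rw [hfree, Int.natAbs_mul]
          have : ((q:ℤ)).natAbs = q := Int.natAbs_natCast q
          rw [this, Nat.mul_comm]
          exact Nat.log_mul_base (by omega) (hwabs j)
        omega
      · -- positive step
        have hIH := IH (n-1) (by omega) (j+1) (by omega)
        have hlm := lmain q hq (wI q a j) (wI q a (j+1)) (eI q a j) (Aa q a j)
          (hwne j) (hwne (j+1)) (w_rec q a j)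
          (by
            have := e_le_qAa q a hq j
            omega)
        have hlm' : Φf q a j + 1 ≤ Φf q a (j+1) + Aa q a j := hlm
        rw [if_pos hjlt]
        omega

end Walk

section WalkMain

variable (q d : ℕ) (a c : ℕ → ℕ)

lemma theta_rec (j : ℕ) (hj : j < d) :
    ((q:ℤ)-1) * (∑ k ∈ Finset.Icc (j+1) d, wI q a k) + wI q a (j+1)
      = (((q:ℤ)-1) * (∑ k ∈ Finset.Icc j d, wI q a k) + wI q a j) + ((q:ℤ)-1) * eI q a j := by
  have hsplit := sum_Icc_step (wI q a) j d (by omega)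
  rw [hsplit, w_rec]
  ring

lemma theta_total :
    ∀ i, i ≤ d → ((q:ℤ)-1) * (∑ k ∈ Finset.Icc i d, wI q a k) + wI q a i
      = (((q:ℤ)-1) * (∑ k ∈ Finset.Icc 0 d, wI q a k) + wI q a 0)
        + ((q:ℤ)-1) * (∑ j ∈ Finset.range i, eI q a j) := by
  intro i
  induction i with
  | zero => intro _; simp
  | succ n ihn =>
    intro hn
    rw [theta_rec q d a n (by omega), ihn (by omega), Finset.sum_range_succ]
    ring

lemma habs_nat_e (hq : 3 ≤ q) (j : ℕ) :
    (eI q a j).natAbs ≤ q * Aa q a j + Bb q a j := by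
  have := e_le_qAa q a hq j
  unfold Bb
  omega

set_option maxHeartbeats 1000000 in
theorem walk_main (hq : 3 ≤ q) (hd : 1 ≤ d) (ha0 : a 0 ≤ 1)
    (hsum : (q - 1) * (∑ j ∈ Finset.range (d+1), a j) + (1 + d) = ∑ j ∈ Finset.range (d+1), q^j)
    (h1 : ∀ j < d, q * a j ≤ a (j+1) + c (j+1))
    (h2 : ∀ j < d, a (j+1) ≤ q * (a j + c j)) :
    ∃ t : ℕ, d ≤ (∑ j ∈ Finset.range (d+1), c j) + t ∧ q ^ t ≤ 2 * d * q := by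
  have hwne : ∀ j, wI q a j ≠ 0 := w_ne q a hq
  have hwabs : (wI q a d).natAbs ≠ 0 := by simpa using hwne d
  set CM := ∑ k ∈ Finset.Icc 0 d, mm q d a k with hCM
  set CC := ∑ j ∈ Finset.range (d+1), c j with hCC
  have hIcceq : Finset.Icc 0 d = Finset.range (d+1) := by
    ext x; simp [Finset.mem_Icc, Finset.mem_range]
  have hCMCC : CM ≤ CC := by
    rw [hCM, hCC, hIcceq]
    apply Finset.sum_le_sum
    intro k hk
    simp only [Finset.mem_range] at hk
    exact mm_le_c q d a c hq h1 h2 k (by omega)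
  -- the ledger inequality : d ≤ Φf d + CM
  have hclaim := claim_ind q d a hq d 0 (by omega)
  have hm0 : (if 0 < d then Aa q a 0 else 0) ≤ mm q d a 0 := by
    split
    · exact Aa_le_mm q d a 0 (by assumption)
    · exact Nat.zero_le _
  have hs0 : CM = mm q d a 0 + ∑ k ∈ Finset.Icc (0+1) d, mm q d a k := by
    rw [hCM]; exact sum_Icc_step _ _ _ (by omega)
  have hled : d ≤ Φf q a d + CM := by omega
  -- the mass inequality
  set SE := ∑ j ∈ Finset.range d, (eI q a j).natAbs with hSE
  set SA := ∑ j ∈ Finset.range d, Aa q a j with hSA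
  set SB := ∑ j ∈ Finset.range d, Bb q a j with hSB
  clear_value CM CC SE SA SB
  have hSEbound : SE ≤ q * SA + SB := by
    rw [hSE, hSA, hSB, Finset.mul_sum, ← Finset.sum_add_distrib]
    apply Finset.sum_le_sum
    intro j _
    exact habs_nat_e q a hq j
  have hSACM : SA ≤ CM := by
    rw [hSA, hCM]
    calc ∑ j ∈ Finset.range d, Aa q a j ≤ ∑ j ∈ Finset.range d, mm q d a j := by
          apply Finset.sum_le_sum
          intro j hj
          simp only [Finset.mem_range] at hj
          exact Aa_le_mm q d a j hj
    _ ≤ ∑ k ∈ Finset.Icc 0 d, mm q d a k := by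
          apply Finset.sum_le_sum_of_subset
          intro x hx
          simp only [Finset.mem_range] at hx
          simp only [Finset.mem_Icc]
          omega
  have hSBCM : SB ≤ CM := by
    rw [hSB, hCM]
    have h1' : ∑ j ∈ Finset.range d, Bb q a j ≤ ∑ j ∈ Finset.range d, mm q d a (j+1) := by
      apply Finset.sum_le_sum
      intro j _
      exact Bb_le_mm q d a j
    have h2' : ∑ j ∈ Finset.range d, mm q d a (j+1)
        = ∑ k ∈ (Finset.range d).image (· + 1), mm q d a k := by
      rw [Finset.sum_image]
      intro x _ y _ h
      beta_reduce at h
      omega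
    have h3' : (Finset.range d).image (· + 1) ⊆ Finset.Icc 0 d := by
      intro x hx
      simp only [Finset.mem_image, Finset.mem_range] at hx
      obtain ⟨y, hy, rfl⟩ := hx
      simp only [Finset.mem_Icc]
      omega
    calc ∑ j ∈ Finset.range d, Bb q a j ≤ ∑ j ∈ Finset.range d, mm q d a (j+1) := h1'
    _ = ∑ k ∈ (Finset.range d).image (· + 1), mm q d a k := h2'
    _ ≤ ∑ k ∈ Finset.Icc 0 d, mm q d a k := Finset.sum_le_sum_of_subset h3'
  -- Θ computation
  have hT0 : ∑ k ∈ Finset.Icc 0 d, wI q a k = -(1 + (d:ℤ)) := by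
    have hzz := congrArg (fun n : ℕ => (n : ℤ)) hsum
    push_cast [Nat.cast_sub (show 1 ≤ q by omega)] at hzz
    rw [hIcceq]
    unfold wI
    rw [Finset.sum_sub_distrib, ← Finset.mul_sum]
    linarith
  have htot := theta_total q d a d (le_refl d)
  have hTd : ∑ k ∈ Finset.Icc d d, wI q a k = wI q a d := by simp
  rw [hTd, hT0] at htot
  have hThetaD : (q:ℤ) * wI q a d
      = (((q:ℤ)-1) * (-(1 + (d:ℤ))) + wI q a 0) + ((q:ℤ)-1) * (∑ j ∈ Finset.range d, eI q a j) := by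
    linear_combination htot
  -- absolute values
  have hqZ3 : (3:ℤ) ≤ (q:ℤ) := by exact_mod_cast hq
  have hw0abs : |wI q a 0| ≤ (q:ℤ) - 2 := by
    have h00 : a 0 = 0 ∨ a 0 = 1 := by omega
    unfold wI
    rw [abs_le]
    rcases h00 with h | h <;> rw [h] <;> constructor <;> push_cast <;> ring_nf <;> omega
  have hsumabs : |∑ j ∈ Finset.range d, eI q a j| ≤ (SE : ℤ) := by
    calc |∑ j ∈ Finset.range d, eI q a j| ≤ ∑ j ∈ Finset.range d, |eI q a j| :=
          Finset.abs_sum_le_sum_abs _ _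
    _ = (SE : ℤ) := by
          rw [hSE]
          push_cast
          rfl
  have hq1Z : (0:ℤ) ≤ (q:ℤ) - 1 := by push_cast; omega
  have habsZ : (q:ℤ) * ((wI q a d).natAbs : ℤ)
      ≤ ((q:ℤ)-1) * (1 + d) + ((q:ℤ) - 2) + ((q:ℤ)-1) * SE := by
    have h5 : (q:ℤ) * ((wI q a d).natAbs : ℤ) = |(q:ℤ) * wI q a d| := by
      rw [abs_mul, Int.abs_eq_natAbs (wI q a d)]
      simp [abs_of_nonneg]
    rw [h5, hThetaD]
    have t1 : |(((q:ℤ)-1) * (-(1 + (d:ℤ))) + wI q a 0) + ((q:ℤ)-1) * (∑ j ∈ Finset.range d, eI q a j)|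
        ≤ |((q:ℤ)-1) * (-(1 + (d:ℤ)))| + |wI q a 0| + |((q:ℤ)-1) * (∑ j ∈ Finset.range d, eI q a j)| := by
      calc _ ≤ |(((q:ℤ)-1) * (-(1 + (d:ℤ))) + wI q a 0)| + |((q:ℤ)-1) * (∑ j ∈ Finset.range d, eI q a j)| :=
            abs_add_le _ _
      _ ≤ _ := by
            have := abs_add_le (((q:ℤ)-1) * (-(1 + (d:ℤ)))) (wI q a 0)
            linarith
    have t2 : |((q:ℤ)-1) * (-(1 + (d:ℤ)))| = ((q:ℤ)-1) * (1 + d) := by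
      rw [abs_mul, abs_of_nonneg hq1Z, abs_of_nonpos (show -(1 + (d:ℤ)) ≤ 0 by omega)]
      ring
    have t3 : |((q:ℤ)-1) * (∑ j ∈ Finset.range d, eI q a j)| ≤ ((q:ℤ)-1) * SE := by
      rw [abs_mul, abs_of_nonneg hq1Z]
      exact mul_le_mul_of_nonneg_left hsumabs hq1Z
    linarith
  -- to ℕ
  have hNat : q * (wI q a d).natAbs ≤ (q-1) * (1 + d) + (q - 2) + (q-1) * SE := by
    have hc1 : ((q:ℤ)-1) = ((q-1 : ℕ) : ℤ) := by push_cast; omega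
    have hc2 : ((q:ℤ)-2) = ((q-2 : ℕ) : ℤ) := by push_cast; omega
    rw [hc1, hc2] at habsZ
    exact_mod_cast habsZ
  have hpow : q ^ (Φf q a d) ≤ (wI q a d).natAbs := Nat.pow_log_le_self q hwabs
  by_cases hcase : q ^ (Φf q a d) ≤ 2 * d * q
  · exact ⟨Φf q a d, by omega, hcase⟩
  · push_neg at hcase
    refine ⟨0, ?_, ?_⟩
    swap
    · have h9 : (2*1)*3 ≤ (2*d)*q := Nat.mul_le_mul (by omega) (by omega)
      rw [pow_zero]
      omega
    have hbig : 2 * d * q * q < q * (wI q a d).natAbs := by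
      calc 2 * d * q * q < q ^ (Φf q a d) * q :=
            (Nat.mul_lt_mul_right (show 0 < q by omega)).mpr hcase
      _ ≤ (wI q a d).natAbs * q := Nat.mul_le_mul_right _ hpow
      _ = q * (wI q a d).natAbs := Nat.mul_comm _ _
    have hSEfin : SE ≤ q * CM + CM := by
      have := Nat.mul_le_mul_left q hSACM
      omega
    -- conclude d ≤ CM ≤ CC
    have hfin : d ≤ CM := by
      by_contra hno
      push_neg at hno
      obtain ⟨Q, rfl⟩ : ∃ Q, q = Q + 3 := ⟨q - 3, by omega⟩
      have e1 : Q + 3 - 1 = Q + 2 := by omega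
      have e2 : Q + 3 - 2 = Q + 1 := by omega
      rw [e1, e2] at hNat
      have hMd : CM + 1 ≤ d := by omega
      have k0 : (Q+3)*CM + CM = (Q+4)*CM := by ring
      have hSE3 : SE ≤ (Q+4)*CM := by rw [← k0]; exact hSEfin
      have k1 : (Q+2)*SE ≤ (Q+2)*((Q+4)*CM) := Nat.mul_le_mul_left _ hSE3
      have k2 : (Q+2)*((Q+4)*CM) + (Q+2)*(Q+4) ≤ (Q+2)*((Q+4)*d) := by
        have h3 := Nat.mul_le_mul_left ((Q+2)*(Q+4)) hMd
        calc (Q+2)*((Q+4)*CM) + (Q+2)*(Q+4) = ((Q+2)*(Q+4))*(CM+1) := by ring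
        _ ≤ ((Q+2)*(Q+4))*d := h3
        _ = (Q+2)*((Q+4)*d) := by ring
      have id9 : 2*d*(Q+3)*(Q+3) + (Q+2)*(Q+4)
          = (Q+2)*(1+d) + (Q+1) + (Q+2)*((Q+4)*d) + (d*(Q*Q+5*Q+8) + (Q*Q+4*Q+5)) := by
        ring
      omega
    omega

end WalkMain

end IsoWalk

namespace IsoGlue
open IsoWalk

noncomputable instance instFintypeQV (q d : ℕ) : Fintype (QV q d) := Fintype.ofFinite _

/-- target size -/
def sstar (q d : ℕ) : ℕ := ∑ k ∈ Finset.range d, ∑ i ∈ Finset.range (k+1), q^i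

lemma geom (q : ℕ) (hq : 1 ≤ q) : ∀ n, (q-1) * (∑ i ∈ Finset.range n, q^i) + 1 = q^n := by
  intro n
  induction n with
  | zero => simp
  | succ m ih =>
    rw [Finset.sum_range_succ, Nat.mul_add]
    have h2 : (q-1) * q^m + q^m = q * q^m := by
      obtain ⟨r, rfl⟩ : ∃ r, q = r + 1 := ⟨q - 1, by omega⟩
      simp only [Nat.succ_sub_one]
      ring
    have h3 : q^(m+1) = q * q^m := by ring
    omega

lemma sstar_eq (q d : ℕ) (hq : 1 ≤ q) :
    (q-1) * sstar q d + (1+d) = ∑ j ∈ Finset.range (d+1), q^j := by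
  induction d with
  | zero => simp [sstar]
  | succ m ih =>
    have hgeom := geom q hq (m+1)
    have hout : sstar q (m+1) = sstar q m + ∑ i ∈ Finset.range (m+1), q^i := by
      rw [sstar, Finset.sum_range_succ, ← sstar]
    rw [hout, Nat.mul_add, Finset.sum_range_succ (f := fun j => q^j) (n := m+1)]
    omega

lemma sstar_le (q d : ℕ) (hq : 2 ≤ q) : sstar q d ≤ ∑ j ∈ Finset.range (d+1), q^j := by
  have h1 := sstar_eq q d (by omega)
  have h2 : sstar q d ≤ (q-1) * sstar q d := Nat.le_mul_of_pos_left _ (by omega)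
  omega

lemma card_level (q d j : ℕ) (hj : j ≤ d) :
    Fintype.card {v : QV q d // v.val.length = j} = q ^ j := by
  have e : {v : QV q d // v.val.length = j} ≃ List.Vector (Fin q) j :=
    { toFun := fun x => ⟨x.val.val, x.property⟩
      invFun := fun w => ⟨⟨w.val, by rw [w.property]; exact hj⟩, w.property⟩
      left_inv := fun x => rfl
      right_inv := fun w => rfl }
  rw [Fintype.card_congr e, card_vector, Fintype.card_fin]

lemma card_QV (q d : ℕ) : Fintype.card (QV q d) = ∑ j ∈ Finset.range (d+1), q ^ j := by
  classical
  rw [← Finset.card_univ]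
  rw [Finset.card_eq_sum_card_fiberwise (f := fun v : QV q d => v.val.length)
      (t := Finset.range (d+1)) (fun x _ => Finset.mem_range.mpr
        (by simpa using Nat.lt_succ_of_le x.property))]
  apply Finset.sum_congr rfl
  intro j hj
  rw [← card_level q d j (by simpa [Nat.lt_succ_iff] using hj)]
  exact (Fintype.card_subtype _).symm

lemma ncard_level_sum (q d : ℕ) (X : Set (QV q d)) :
    X.ncard = ∑ j ∈ Finset.range (d+1), (X ∩ QV.level q d j).ncard := by
  classical
  rw [Set.ncard_eq_toFinset_card' X]
  rw [Finset.card_eq_sum_card_fiberwise (f := fun v : QV q d => v.val.length)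
      (t := Finset.range (d+1)) (fun x _ => Finset.mem_range.mpr
        (by simpa using Nat.lt_succ_of_le x.property))]
  apply Finset.sum_congr rfl
  intro j _
  rw [Set.ncard_eq_toFinset_card']
  congr 1
  ext v
  simp [QV.level, Set.mem_toFinset]
  exact (@Set.mem_toFinset _ (X ∩ QV.level q d j) _ v).symm

lemma a0_le (q d : ℕ) (S : Set (QV q d)) : (S ∩ QV.level q d 0).ncard ≤ 1 := by
  classical
  have hsub : S ∩ QV.level q d 0 ⊆ {(⟨[], by simp⟩ : QV q d)} := by
    rintro v ⟨_, h0⟩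
    have hlen : v.val.length = 0 := h0
    have : v.val = [] := List.length_eq_zero_iff.mp hlen
    exact Subtype.ext this
  calc (S ∩ QV.level q d 0).ncard ≤ ({(⟨[], by simp⟩ : QV q d)} : Set (QV q d)).ncard :=
        Set.ncard_le_ncard hsub (Set.toFinite _)
  _ = 1 := Set.ncard_singleton _

/-- the appending map -/
def app (q d : ℕ) (p : QV q d × Fin q) : QV q d :=
  if h : p.1.val.length < d then ⟨p.1.val ++ [p.2], by
    rw [List.length_append]
    simpa using h⟩ else p.1

lemma app_val (q d : ℕ) (p : QV q d × Fin q) (h : p.1.val.length < d) :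
    (app q d p).val = p.1.val ++ [p.2] := by
  simp [app, h]

lemma children_bound (q d : ℕ) (S : Set (QV q d)) (j : ℕ) (hj : j < d) :
    q * (S ∩ QV.level q d j).ncard
      ≤ (S ∩ QV.level q d (j+1)).ncard
        + (vertexBorder (qTree q d) S ∩ QV.level q d (j+1)).ncard := by
  classical
  set B := vertexBorder (qTree q d) S with hB
  set P := (S ∩ QV.level q d j).toFinset with hP
  set T := ((S ∩ QV.level q d (j+1)) ∪ (B ∩ QV.level q d (j+1))).toFinset with hT
  have hmaps : ∀ p ∈ P ×ˢ (Finset.univ : Finset (Fin q)), app q d p ∈ T := by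
    rintro ⟨u, i⟩ hp
    simp only [Finset.mem_product] at hp
    have hu : u ∈ S ∩ QV.level q d j := by
      rw [hP] at hp
      exact Set.mem_toFinset.mp hp.1
    have hlen : u.val.length = j := hu.2
    have hlt : (u, i).1.val.length < d := by rw [hlen] at *; omega
    have hval := app_val q d (u, i) hlt
    have hlev : app q d (u, i) ∈ QV.level q d (j+1) := by
      show (app q d (u, i)).val.length = j + 1
      rw [hval, List.length_append, hlen]
      rfl
    have hadj : (qTree q d).Adj u (app q d (u, i)) := by
      show (∃ a : Fin q, (app q d (u,i)).val = u.val ++ [a]) ∨ _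
      exact Or.inl ⟨i, hval⟩
    rw [hT]
    rw [Set.mem_toFinset]
    by_cases hmem : app q d (u, i) ∈ S
    · exact Or.inl ⟨hmem, hlev⟩
    · refine Or.inr ⟨⟨hmem, u, hu.1, hadj⟩, hlev⟩
  have hinj : Set.InjOn (app q d) ↑(P ×ˢ (Finset.univ : Finset (Fin q))) := by
    rintro ⟨u, i⟩ hp ⟨u', i'⟩ hp' heq
    simp only [Finset.coe_product, Set.mem_prod, Finset.mem_coe, hP, Set.mem_toFinset] at hp hp'
    have hu : u ∈ S ∩ QV.level q d j := hp.1
    have hu' : u' ∈ S ∩ QV.level q d j := hp'.1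
    have hlt : (u, i).1.val.length < d := by have := hu.2; show u.val.length < d; rw [this]; omega
    have hlt' : (u', i').1.val.length < d := by have := hu'.2; show u'.val.length < d; rw [this]; omega
    have hveq : u.val ++ [i] = u'.val ++ [i'] := by
      rw [← app_val q d (u,i) hlt, ← app_val q d (u',i') hlt', heq]
    have hlens : u.val.length = u'.val.length := by
      have : u.val.length = j := hu.2
      have : u'.val.length = j := hu'.2
      omega
    obtain ⟨h1, h2⟩ := List.append_inj hveq hlens
    have : i = i' := by simpa using h2
    subst this
    have : u = u' := Subtype.ext h1
    subst this
    rfl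
  have hcard1 : (P ×ˢ (Finset.univ : Finset (Fin q))).card = P.card * q := by
    rw [Finset.card_product, Finset.card_univ, Fintype.card_fin]
  have hle := Finset.card_le_card_of_injOn (app q d) hmaps hinj
  rw [hcard1] at hle
  have hPcard : P.card = (S ∩ QV.level q d j).ncard := (Set.ncard_eq_toFinset_card' _).symm
  have hTcard : T.card ≤ (S ∩ QV.level q d (j+1)).ncard + (B ∩ QV.level q d (j+1)).ncard := by
    rw [hT, ← Set.ncard_eq_toFinset_card']
    exact Set.ncard_union_le _ _
  calc q * (S ∩ QV.level q d j).ncard = P.card * q := by rw [hPcard]; ring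
  _ ≤ T.card := hle
  _ ≤ _ := hTcard

/-- the parent map -/
def par (q d : ℕ) (hq : 0 < q) (v : QV q d) : QV q d × Fin q :=
  if h : v.val = [] then (v, ⟨0, hq⟩)
  else (⟨v.val.dropLast, by
      have := v.property
      rw [List.length_dropLast]
      omega⟩, v.val.getLast h)

lemma parents_bound (q d : ℕ) (hq : 0 < q) (S : Set (QV q d)) (j : ℕ) (hj : j < d) :
    (S ∩ QV.level q d (j+1)).ncard
      ≤ q * ((S ∩ QV.level q d j).ncard
        + (vertexBorder (qTree q d) S ∩ QV.level q d j).ncard) := by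
  classical
  set B := vertexBorder (qTree q d) S with hB
  set s := (S ∩ QV.level q d (j+1)).toFinset with hs
  set t := ((S ∩ QV.level q d j) ∪ (B ∩ QV.level q d j)).toFinset ×ˢ (Finset.univ : Finset (Fin q)) with ht
  have hkey : ∀ v ∈ S ∩ QV.level q d (j+1), ∃ h : v.val ≠ [],
      (par q d hq v).1.val = v.val.dropLast ∧ (par q d hq v).1.val.length = j ∧
      v.val = (par q d hq v).1.val ++ [(par q d hq v).2] := by
    intro v hv
    have hlen : v.val.length = j + 1 := hv.2
    have hne : v.val ≠ [] := by
      intro h0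
      rw [h0] at hlen
      simp at hlen
    refine ⟨hne, ?_, ?_, ?_⟩
    · simp [par, hne]
    · simp [par, hne, List.length_dropLast, hlen]
    · simp only [par, hne, dif_neg, not_false_iff]
      exact (List.dropLast_append_getLast hne).symm
  have hmaps : ∀ v ∈ s, par q d hq v ∈ t := by
    intro v hvs
    have hv : v ∈ S ∩ QV.level q d (j+1) := by
      rw [hs] at hvs
      exact Set.mem_toFinset.mp hvs
    obtain ⟨hne, hval, hplen, hid⟩ := hkey v hv
    rw [ht, Finset.mem_product]
    constructor
    · rw [Set.mem_toFinset]
      have hadj : (qTree q d).Adj v (par q d hq v).1 := by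
        show _ ∨ (∃ a : Fin q, v.val = (par q d hq v).1.val ++ [a])
        exact Or.inr ⟨(par q d hq v).2, hid⟩
      by_cases hmem : (par q d hq v).1 ∈ S
      · exact Or.inl ⟨hmem, hplen⟩
      · exact Or.inr ⟨⟨hmem, v, hv.1, hadj⟩, hplen⟩
    · exact Finset.mem_univ _
  have hinj : Set.InjOn (par q d hq) ↑s := by
    intro v hvs v' hvs' heq
    have hv : v ∈ S ∩ QV.level q d (j+1) := by
      simp only [hs, Finset.mem_coe, Set.mem_toFinset] at hvs; exact hvs
    have hv' : v' ∈ S ∩ QV.level q d (j+1) := by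
      simp only [hs, Finset.mem_coe, Set.mem_toFinset] at hvs'; exact hvs'
    obtain ⟨hne, hval, _, hid⟩ := hkey v hv
    obtain ⟨hne', hval', _, hid'⟩ := hkey v' hv'
    apply Subtype.ext
    rw [hid, hid', heq]
  have hle := Finset.card_le_card_of_injOn (par q d hq) hmaps hinj
  have hscard : s.card = (S ∩ QV.level q d (j+1)).ncard := (Set.ncard_eq_toFinset_card' _).symm
  have htcard : t.card ≤ ((S ∩ QV.level q d j).ncard + (B ∩ QV.level q d j).ncard) * q := by
    rw [ht, Finset.card_product, Finset.card_univ, Fintype.card_fin]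
    apply Nat.mul_le_mul_right
    rw [← Set.ncard_eq_toFinset_card']
    exact Set.ncard_union_le _ _
  calc (S ∩ QV.level q d (j+1)).ncard = s.card := hscard.symm
  _ ≤ t.card := hle
  _ ≤ ((S ∩ QV.level q d j).ncard + (B ∩ QV.level q d j).ncard) * q := htcard
  _ = q * ((S ∩ QV.level q d j).ncard + (B ∩ QV.level q d j).ncard) := Nat.mul_comm _ _

lemma border_bound (q d : ℕ) (hq3 : 3 ≤ q) (hd : 1 ≤ d) (S : Set (QV q d))
    (hS : S.ncard = sstar q d) :
    ∃ t : ℕ, d ≤ (vertexBorder (qTree q d) S).ncard + t ∧ q ^ t ≤ 2 * d * q := by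
  classical
  set a : ℕ → ℕ := fun j => (S ∩ QV.level q d j).ncard with ha
  set c : ℕ → ℕ := fun j => (vertexBorder (qTree q d) S ∩ QV.level q d j).ncard with hc
  have hsum : (q - 1) * (∑ j ∈ Finset.range (d+1), a j) + (1 + d)
      = ∑ j ∈ Finset.range (d+1), q^j := by
    rw [ha]
    simp only
    rw [← ncard_level_sum q d S, hS]
    exact sstar_eq q d (by omega)
  obtain ⟨t, h1, h2⟩ := walk_main q d a c hq3 hd (a0_le q d S) hsum
    (fun j hj => children_bound q d S j hj)
    (fun j hj => parents_bound q d (by omega) S j hj)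
  refine ⟨t, ?_, h2⟩
  have hcsum : ∑ j ∈ Finset.range (d+1), c j = (vertexBorder (qTree q d) S).ncard :=
    (ncard_level_sum q d _).symm
  omega

end IsoGlue

theorem qary_tree_iso_peak_lower_q34 (q d : ℕ) (hq : q = 3 ∨ q = 4) (hd : 1 ≤ d) :
    (d : ℝ) - Real.logb q d - (Real.logb q 2 + 1) ≤ (isoPeak (qTree q d) : ℝ) := by
  classical
  have hq3 : 3 ≤ q := by rcases hq with h | h <;> omega
  have hcard : Nat.card (QV q d) = ∑ j ∈ Finset.range (d+1), q^j := by
    rw [Nat.card_eq_fintype_card, IsoGlue.card_QV]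
  have hlee : IsoGlue.sstar q d ≤ Nat.card (QV q d) := by
    rw [hcard]; exact IsoGlue.sstar_le q d (by omega)
  have hle : IsoGlue.sstar q d ≤ (Finset.univ : Finset (QV q d)).card := by
    rw [Finset.card_univ, ← Nat.card_eq_fintype_card]; exact hlee
  obtain ⟨T, _, hT⟩ := Finset.exists_subset_card_eq hle
  have hmemim : isoProfile (qTree q d) (IsoGlue.sstar q d)
      ∈ (fun S => (vertexBorder (qTree q d) S).ncard) ''
        {S : Set (QV q d) | S.ncard = IsoGlue.sstar q d} := by
    apply Nat.sInf_mem
    refine ⟨(vertexBorder (qTree q d) (↑T : Set (QV q d))).ncard, ⟨(↑T : Set (QV q d)), ?_, rfl⟩⟩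
    simp only [Set.mem_setOf_eq, Set.ncard_coe_finset]
    exact hT
  obtain ⟨S₀, hS₀, hPro⟩ := hmemim
  simp only [Set.mem_setOf_eq] at hS₀
  obtain ⟨t, hbd, hpow⟩ := IsoGlue.border_bound q d hq3 hd S₀ hS₀
  have hPeak : isoProfile (qTree q d) (IsoGlue.sstar q d) ≤ isoPeak (qTree q d) := by
    apply le_csSup
    · exact ((Set.finite_Icc 0 (Nat.card (QV q d))).image _).bddAbove
    · exact ⟨IsoGlue.sstar q d, Set.mem_Icc.mpr ⟨Nat.zero_le _, hlee⟩, rfl⟩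
  rw [← hPro] at hPeak
  -- real arithmetic
  have hq1R : (1:ℝ) < (q:ℝ) := by
    have : (3:ℝ) ≤ (q:ℝ) := by exact_mod_cast hq3
    linarith
  have hdR : (1:ℝ) ≤ (d:ℝ) := by exact_mod_cast hd
  have hpowR : ((q:ℝ))^t ≤ 2*(d:ℝ)*(q:ℝ) := by exact_mod_cast hpow
  have hlogt : (t:ℝ) ≤ Real.logb q 2 + Real.logb q d + 1 := by
    have h1 : Real.logb q ((q:ℝ)^t) ≤ Real.logb q (2*(d:ℝ)*(q:ℝ)) :=
      Real.logb_le_logb_of_le hq1R (by positivity) hpowR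
    rw [Real.logb_pow] at h1
    rw [Real.logb_self_eq_one hq1R] at h1
    have h2 : Real.logb q (2*(d:ℝ)*(q:ℝ))
        = Real.logb q 2 + Real.logb q d + Real.logb q q := by
      rw [Real.logb_mul (by positivity) (by positivity),
          Real.logb_mul (by norm_num) (by positivity)]
    rw [h2, Real.logb_self_eq_one hq1R] at h1
    simpa using h1
  have hBt : (d:ℝ) ≤ ((vertexBorder (qTree q d) S₀).ncard : ℝ) + t := by exact_mod_cast hbd
  have hfin : ((vertexBorder (qTree q d) S₀).ncard : ℝ) ≤ (isoPeak (qTree q d) : ℝ) := by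
    exact_mod_cast hPeak
  linarith
end

section
/- Let T be the complete q-ary tree of depth d (q ≥ 2, d ≥ 1), let S ⊆ V(T), let u, v be vertices in level L_i that are swappable in S, and suppose that every level j < i of S is left-ordered. Then the treeswap S' of S between u and v is a compression of S; that is, |S'| = |S| and |δ(S')| ≤ |δ(S)|. -/
open scoped Classical

section Aux

namespace QV

variable {q d : ℕ}

lemma lex_irrefl : ∀ l : List (Fin q), ¬ List.Lex (· < ·) l l := by
  intro l h
  induction l with
  | nil => cases h
  | cons a t ih =>
    cases h with
    | cons h' => exact ih h'
    | rel h' => exact lt_irrefl _ h'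

lemma lex_dropLast : ∀ (p p' : List (Fin q)) (a b : Fin q),
    p.length = p'.length → p ≠ p' →
    List.Lex (· < ·) (p ++ [a]) (p' ++ [b]) → List.Lex (· < ·) p p' := by
  intro p
  induction p with
  | nil =>
    intro p' a b hl hne _
    cases p' with
    | nil => exact absurd rfl hne
    | cons c t => simp at hl
  | cons c t ih =>
    intro p' a b hl hne hlex
    cases p' with
    | nil => simp at hl
    | cons c' t' =>
      simp only [List.cons_append] at hlex
      cases hlex with
      | rel h => exact List.Lex.rel h
      | cons h =>
        have hne' : t ≠ t' := by rintro rfl; exact hne rfl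
        exact List.Lex.cons (ih t' a b (by simpa using hl) hne' h)

lemma prefix_unique {u v w : List (Fin q)} (hlen : u.length = v.length)
    (hu : u <+: w) (hv : v <+: w) : u = v :=
  (List.prefix_of_prefix_length_le hu hv hlen.le).sublist.eq_of_length hlen

lemma swapAt_left {u v w : QV q d} (hlen : u.val.length = v.val.length)
    (hw : u.val <+: w.val) :
    (swapAt u v w).val = v.val ++ w.val.drop u.val.length := by
  have hcond : (v.val ++ w.val.drop u.val.length).length ≤ d := by
    have h1 : u.val.length ≤ w.val.length := hw.length_le
    have h2 := w.prop
    simp only [List.length_append, List.length_drop]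
    omega
  erw [swapAt, dif_pos ⟨hw, hcond⟩]

lemma swapAt_right {u v w : QV q d} (hlen : u.val.length = v.val.length)
    (hne : u.val ≠ v.val) (hw : v.val <+: w.val) :
    (swapAt u v w).val = u.val ++ w.val.drop v.val.length := by
  have hcond : (u.val ++ w.val.drop v.val.length).length ≤ d := by
    have h1 : v.val.length ≤ w.val.length := hw.length_le
    have h2 := w.prop
    simp only [List.length_append, List.length_drop]
    omega
  erw [swapAt, dif_neg, dif_pos ⟨hw, hcond⟩]
  rintro ⟨h, -⟩
  exact hne (prefix_unique hlen h hw)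

lemma swapAt_fix {u v w : QV q d} (h1 : ¬ u.val <+: w.val) (h2 : ¬ v.val <+: w.val) :
    swapAt u v w = w := by
  erw [swapAt, dif_neg, dif_neg]
  · rintro ⟨h, -⟩; exact h2 h
  · rintro ⟨h, -⟩; exact h1 h

lemma swapAt_fix_of_length_lt {u v w : QV q d} (hlen : u.val.length = v.val.length)
    (hw : w.val.length < u.val.length) : swapAt u v w = w :=
  swapAt_fix (fun h => absurd h.length_le (by omega))
    (fun h => absurd h.length_le (by omega))

lemma swapAt_invol {u v : QV q d} (hlen : u.val.length = v.val.length)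
    (hne : u.val ≠ v.val) : Function.Involutive (swapAt u v) := by
  intro w
  by_cases h1 : u.val <+: w.val
  · obtain ⟨t, ht⟩ := h1
    have e1 : (swapAt u v w).val = v.val ++ t := by
      rw [swapAt_left hlen ⟨t, ht⟩, ← ht, List.drop_left]
    have e2 := swapAt_right hlen hne (w := swapAt u v w) ⟨t, e1.symm⟩
    apply Subtype.ext
    rw [e2, e1, List.drop_left, ht]
  · by_cases h2 : v.val <+: w.val
    · obtain ⟨t, ht⟩ := h2
      have e1 : (swapAt u v w).val = u.val ++ t := by
        rw [swapAt_right hlen hne ⟨t, ht⟩, ← ht, List.drop_left]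
      have e2 := swapAt_left hlen (w := swapAt u v w) ⟨t, e1.symm⟩
      apply Subtype.ext
      rw [e2, e1, List.drop_left, ht]
    · rw [swapAt_fix h1 h2, swapAt_fix h1 h2]

lemma swapAt_self_left {u v : QV q d} (hlen : u.val.length = v.val.length) :
    swapAt u v u = v := by
  apply Subtype.ext
  rw [swapAt_left hlen (List.prefix_refl _), List.drop_length, List.append_nil]

lemma swapAt_self_right {u v : QV q d} (hlen : u.val.length = v.val.length)
    (hne : u.val ≠ v.val) : swapAt u v v = u := by
  apply Subtype.ext
  rw [swapAt_right hlen hne (List.prefix_refl _), List.drop_length, List.append_nil]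

end QV

end Aux
namespace QV

variable {q d : ℕ}

lemma adj_swapAt_child {u v x w : QV q d} (hlen : u.val.length = v.val.length)
    (hne : u.val ≠ v.val) (a : Fin q) (hwx : w.val = x.val ++ [a]) :
    (qTree q d).Adj (swapAt u v x) (swapAt u v w) ∨
    (w = u ∧ x.val = u.val.dropLast) ∨ (w = v ∧ x.val = v.val.dropLast) := by
  have hxw : x.val <+: w.val := ⟨[a], hwx.symm⟩
  by_cases hux : u.val <+: x.val
  · left
    obtain ⟨t, ht⟩ := hux
    have hx := swapAt_left hlen (w := x) ⟨t, ht⟩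
    have hw : (swapAt u v w).val = v.val ++ (t ++ [a]) := by
      rw [swapAt_left hlen (w := w) ⟨t ++ [a], by rw [hwx, ← ht]; simp⟩, hwx, ← ht]
      rw [List.append_assoc, List.drop_left]
    left
    refine ⟨a, ?_⟩
    rw [hw, hx, ← ht, List.drop_left, List.append_assoc]
  · by_cases hvx : v.val <+: x.val
    · left
      obtain ⟨t, ht⟩ := hvx
      have hx := swapAt_right hlen hne (w := x) ⟨t, ht⟩
      have hw : (swapAt u v w).val = u.val ++ (t ++ [a]) := by
        rw [swapAt_right hlen hne (w := w) ⟨t ++ [a], by rw [hwx, ← ht]; simp⟩, hwx, ← ht]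
        rw [List.append_assoc, List.drop_left]
      left
      refine ⟨a, ?_⟩
      rw [hw, hx, ← ht, List.drop_left, List.append_assoc]
    · by_cases huw : u.val <+: w.val
      · right; left
        have hlt : x.val.length < u.val.length := by
          by_contra hle
          exact hux (List.prefix_of_prefix_length_le huw hxw (by omega))
        have hlenw : u.val.length = w.val.length := by
          have h1 := huw.length_le
          have h2 : w.val.length = x.val.length + 1 := by rw [hwx]; simp
          omega
        have hweq : u.val = w.val := huw.sublist.eq_of_length hlenw
        refine ⟨Subtype.ext hweq.symm, ?_⟩
        rw [hweq, hwx, List.dropLast_concat]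
      · by_cases hvw : v.val <+: w.val
        · right; right
          have hlt : x.val.length < v.val.length := by
            by_contra hle
            exact hvx (List.prefix_of_prefix_length_le hvw hxw (by omega))
          have hlenw : v.val.length = w.val.length := by
            have h1 := hvw.length_le
            have h2 : w.val.length = x.val.length + 1 := by rw [hwx]; simp
            omega
          have hweq : v.val = w.val := hvw.sublist.eq_of_length hlenw
          refine ⟨Subtype.ext hweq.symm, ?_⟩
          rw [hweq, hwx, List.dropLast_concat]
        · left
          rw [swapAt_fix hux hvx, swapAt_fix huw hvw]
          exact Or.inl ⟨a, hwx⟩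

end QV
namespace QV

variable {q d : ℕ}

lemma qTree_adj {x y : QV q d} : (qTree q d).Adj x y ↔
    ((∃ a : Fin q, y.val = x.val ++ [a]) ∨ (∃ a : Fin q, x.val = y.val ++ [a])) := Iff.rfl

lemma parent_contra {S : Set (QV q d)} {u v : QV q d} {i : ℕ}
    (hui : u.val.length = i) (hvi : v.val.length = i)
    (hlex : List.Lex (· < ·) u.val v.val)
    (hlo : ∀ j < i, LevelLeftOrdered S j)
    (hune0 : u.val ≠ []) (hvne0 : v.val ≠ [])
    {pu pv : QV q d} (hpu : pu.val = u.val.dropLast) (hpv : pv.val = v.val.dropLast)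
    (hnep : pu.val ≠ pv.val) (hpuS : pu ∉ S)
    (hcase : pv ∈ S ∨ (pv ∉ S ∧ (∀ c, IsChildOf c pu → c ∉ S) ∧ v ∈ S)) : False := by
  have hipos : 0 < i := by
    rcases Nat.eq_zero_or_pos i with h0 | h
    · exact absurd (List.length_eq_zero_iff.mp (hui.trans h0)) hune0
    · exact h
  have hpulen : pu.val.length = i - 1 := by rw [hpu, List.length_dropLast, hui]
  have hpvlen : pv.val.length = i - 1 := by rw [hpv, List.length_dropLast, hvi]
  have hlexp : List.Lex (· < ·) pu.val pv.val := by
    apply lex_dropLast pu.val pv.val (u.val.getLast hune0) (v.val.getLast hvne0)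
      (by rw [hpulen, hpvlen]) hnep
    rw [hpu, hpv, List.dropLast_append_getLast hune0, List.dropLast_append_getLast hvne0]
    exact hlex
  have hLO : LeftOf pu pv := ⟨by rw [hpulen, hpvlen], hlexp⟩
  apply hlo (i - 1) (by omega) pu pv hpulen
  rcases hcase with h | ⟨h1, h2, h3⟩
  · exact ⟨hLO, Or.inl ⟨hpuS, h⟩⟩
  · exact ⟨hLO, Or.inr ⟨hpuS, h1, h2,
      ⟨v, ⟨v.val.getLast hvne0, by rw [hpv]; exact (List.dropLast_append_getLast hvne0).symm⟩, h3⟩⟩⟩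

lemma border_mem {S : Set (QV q d)} {u v : QV q d} {i : ℕ}
    (hui : u ∈ level q d i) (hvi : v ∈ level q d i)
    (hsw : Swappable S u v) (hlo : ∀ j < i, LevelLeftOrdered S j)
    {w : QV q d} (hw : w ∈ vertexBorder (qTree q d) (treeswap S u v)) :
    swapAt u v w ∈ vertexBorder (qTree q d) S := by
  obtain ⟨⟨hlen, hlex⟩, hcases⟩ := hsw
  have hne : u.val ≠ v.val := fun h => lex_irrefl v.val (h ▸ hlex)
  have hulen : u.val.length = i := hui
  have hvlen : v.val.length = i := hvi
  have hunotS : u ∉ S := by rcases hcases with ⟨h, -⟩ | ⟨h, -⟩ <;> exact h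
  have hipos : 0 < i := by
    rcases Nat.eq_zero_or_pos i with h0 | h
    · exact absurd ((List.length_eq_zero_iff.mp (hulen.trans h0)).trans
        (List.length_eq_zero_iff.mp (hvlen.trans h0)).symm) hne
    · exact h
  have hune0 : u.val ≠ [] := List.length_pos_iff.mp (by rw [hulen]; exact hipos)
  have hvne0 : v.val ≠ [] := List.length_pos_iff.mp (by rw [hvlen]; exact hipos)
  have hpud : u.val.dropLast.length ≤ d := by
    rw [List.length_dropLast]; exact le_trans (Nat.sub_le _ _) u.prop
  have hpvd : v.val.dropLast.length ≤ d := by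
    rw [List.length_dropLast]; exact le_trans (Nat.sub_le _ _) v.prop
  obtain ⟨hwS', x, hxS', hadj⟩ := hw
  have hxS : swapAt u v x ∈ S := hxS'
  refine ⟨hwS', ?_⟩
  rcases qTree_adj.mp hadj with ⟨a, hwx⟩ | ⟨a, hxw⟩
  · -- w = x ++ [a]
    rcases adj_swapAt_child hlen hne a hwx with hgood | ⟨hwu, hxval⟩ | ⟨hwv, hxval⟩
    · exact ⟨swapAt u v x, hxS, hgood⟩
    · -- w = u
      rw [hwu] at hwS' ⊢
      rcases hcases with ⟨-, hvS⟩ | ⟨-, -, -, c, hc, hcS⟩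
      · exact absurd (show swapAt u v u ∈ S by
          rw [swapAt_self_left hlen]; exact hvS) hwS'
      · refine ⟨c, hcS, ?_⟩
        rw [swapAt_self_left hlen]
        exact qTree_adj.mpr (Or.inr hc)
    · -- w = v, x is the parent of v
      rw [hwv]
      have hxlen : x.val.length < u.val.length := by
        rw [hxval, List.length_dropLast, hulen, hvlen]; omega
      have hxfix : swapAt u v x = x := swapAt_fix_of_length_lt hlen hxlen
      have hxS2 : x ∈ S := by rw [hxfix] at hxS; exact hxS
      rw [swapAt_self_right hlen hne]
      by_cases hpp : u.val.dropLast = x.val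
      · refine ⟨x, hxS2, qTree_adj.mpr (Or.inl ⟨u.val.getLast hune0, ?_⟩)⟩
        conv_lhs => rw [← List.dropLast_append_getLast hune0]
        rw [hpp]
      · by_cases hpuS : (⟨u.val.dropLast, hpud⟩ : QV q d) ∈ S
        · exact ⟨_, hpuS, qTree_adj.mpr (Or.inl ⟨u.val.getLast hune0,
            (List.dropLast_append_getLast hune0).symm⟩)⟩
        · exact absurd (Or.inl hxS2)
            (fun hc => parent_contra hulen hvlen hlex hlo hune0 hvne0
              (pu := ⟨u.val.dropLast, hpud⟩) (pv := x) rfl hxval hpp hpuS hc)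
  · -- x = w ++ [a]
    rcases adj_swapAt_child hlen hne a hxw with hgood | ⟨hxu, hwval⟩ | ⟨hxv, hwval⟩
    · exact ⟨swapAt u v x, hxS, hgood.symm⟩
    · -- x = u, w is the parent of u
      rw [hxu] at hxS
      have hvS : v ∈ S := by rw [swapAt_self_left hlen] at hxS; exact hxS
      have hwlen : w.val.length < u.val.length := by
        rw [hwval, List.length_dropLast, hulen]; omega
      have hwfix : swapAt u v w = w := swapAt_fix_of_length_lt hlen hwlen
      have hwnotS : w ∉ S := fun h => hwS' (show swapAt u v w ∈ S by rw [hwfix]; exact h)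
      rw [hwfix]
      by_cases hpp : w.val = v.val.dropLast
      · refine ⟨v, hvS, qTree_adj.mpr (Or.inr ⟨v.val.getLast hvne0, ?_⟩)⟩
        conv_lhs => rw [← List.dropLast_append_getLast hvne0]
        rw [hpp]
      · by_contra hno
        push_neg at hno
        by_cases hpvS : (⟨v.val.dropLast, hpvd⟩ : QV q d) ∈ S
        · exact parent_contra hulen hvlen hlex hlo hune0 hvne0
            (pv := ⟨v.val.dropLast, hpvd⟩) hwval rfl hpp hwnotS (Or.inl hpvS)
        · refine parent_contra hulen hvlen hlex hlo hune0 hvne0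
            (pv := ⟨v.val.dropLast, hpvd⟩) hwval rfl hpp hwnotS (Or.inr ⟨hpvS, ?_, hvS⟩)
          intro c hc hcS
          exact hno c hcS (qTree_adj.mpr (Or.inr hc))
    · -- x = v
      rw [hxv] at hxS
      have : u ∈ S := by rw [swapAt_self_right hlen hne] at hxS; exact hxS
      exact absurd this hunotS

end QV
theorem treeswap_is_compression (q d : ℕ) (hq : 2 ≤ q) (hd : 1 ≤ d)
    (S : Set (QV q d)) (u v : QV q d) (i : ℕ)
    (hui : u ∈ QV.level q d i) (hvi : v ∈ QV.level q d i)
    (hsw : QV.Swappable S u v)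
    (hlo : ∀ j < i, QV.LevelLeftOrdered S j) :
    (QV.treeswap S u v).ncard = S.ncard ∧
    (vertexBorder (qTree q d) (QV.treeswap S u v)).ncard ≤
      (vertexBorder (qTree q d) S).ncard := by
  have hlen : u.val.length = v.val.length := hsw.1.1
  have hne : u.val ≠ v.val := fun h => QV.lex_irrefl v.val (h ▸ hsw.1.2)
  have hinv : Function.Involutive (QV.swapAt u v) := QV.swapAt_invol hlen hne
  have hinj : Function.Injective (QV.swapAt u v) := hinv.injective
  constructor
  · have himg : QV.treeswap S u v = QV.swapAt u v '' S := by
      ext w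
      constructor
      · intro hw
        exact ⟨QV.swapAt u v w, hw, hinv w⟩
      · rintro ⟨s, hs, rfl⟩
        show QV.swapAt u v (QV.swapAt u v s) ∈ S
        rw [hinv]
        exact hs
    rw [himg, Set.ncard_image_of_injective _ hinj]
  · have hsub : QV.swapAt u v '' vertexBorder (qTree q d) (QV.treeswap S u v) ⊆
        vertexBorder (qTree q d) S := by
      rintro _ ⟨w, hw, rfl⟩
      exact QV.border_mem hui hvi hsw hlo hw
    calc (vertexBorder (qTree q d) (QV.treeswap S u v)).ncard
        = (QV.swapAt u v '' vertexBorder (qTree q d) (QV.treeswap S u v)).ncard :=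
          (Set.ncard_image_of_injective _ hinj).symm
      _ ≤ (vertexBorder (qTree q d) S).ncard := Set.ncard_le_ncard hsub (Set.toFinite _)
end

section
/- Let T be the complete q-ary tree of depth d (q ≥ 2, d ≥ 1). If S ⊆ V(T) is such that no U ⊆ V(T) satisfies U < S, then S is left-ordered. -/
open scoped Classical

section LexAux

variable {α : Type*} [LinearOrder α]

lemma lex_append {l₁ l₂ : List α} (hlen : l₁.length = l₂.length)
    (h : List.Lex (· < ·) l₁ l₂) (s t : List α) :
    List.Lex (· < ·) (l₁ ++ s) (l₂ ++ t) := by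
  induction h generalizing s t with
  | nil => simp at hlen
  | @cons a l1 l2 h ih =>
      exact List.Lex.cons (ih (by simpa using hlen) s t)
  | @rel a b l1 l2 h => exact List.Lex.rel h

lemma lex_asymm : ∀ {l₁ l₂ : List α},
    List.Lex (· < ·) l₁ l₂ → ¬ List.Lex (· < ·) l₂ l₁ := by
  intro l₁ l₂ h
  induction h with
  | nil => intro h'; cases h'
  | @cons a l1 l2 h ih =>
      intro h'
      cases h' with
      | cons h'' => exact ih h''
      | rel h'' => exact lt_irrefl _ h''
  | @rel a b l1 l2 h =>
      intro h'
      cases h' with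
      | cons h'' => exact lt_irrefl _ h
      | rel h'' => exact absurd h (not_lt_of_gt h'')

lemma lex_irrefl (l : List α) : ¬ List.Lex (· < ·) l l :=
  fun h => lex_asymm h h

end LexAux

lemma exchange_level_ncard {q d : ℕ} {S : Set (QV q d)} {u v : QV q d}
    (huS : u ∉ S) (hvS : v ∈ S) (huv : u.val.length = v.val.length) :
    ∀ j, ((insert u (S \ {v})) ∩ QV.level q d j).ncard = (S ∩ QV.level q d j).ncard := by
  intro j
  by_cases hj : j = u.val.length
  · subst hj
    have hu : u ∈ QV.level q d u.val.length := rfl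
    have hv : v ∈ QV.level q d u.val.length := huv.symm
    have heq : insert u (S \ {v}) ∩ QV.level q d u.val.length
        = insert u ((S ∩ QV.level q d u.val.length) \ {v}) := by
      ext x
      simp only [Set.mem_inter_iff, Set.mem_insert_iff, Set.mem_diff,
        Set.mem_singleton_iff]
      constructor
      · rintro ⟨hx | ⟨hx1, hx2⟩, hx3⟩
        · exact Or.inl hx
        · exact Or.inr ⟨⟨hx1, hx3⟩, hx2⟩
      · rintro (rfl | ⟨⟨hx1, hx3⟩, hx2⟩)
        · exact ⟨Or.inl rfl, hu⟩
        · exact ⟨Or.inr ⟨hx1, hx2⟩, hx3⟩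
    rw [heq]
    exact Set.ncard_exchange (by simp [huS]) ⟨hvS, hv⟩
  · have hu : u ∉ QV.level q d j := fun hh => hj hh.symm
    have hv : v ∉ QV.level q d j := fun hh => hj (by rw [huv]; exact hh.symm)
    congr 1
    ext x
    simp only [Set.mem_inter_iff, Set.mem_insert_iff, Set.mem_diff,
      Set.mem_singleton_iff]
    constructor
    · rintro ⟨rfl | ⟨hx1, _⟩, hx3⟩
      · exact absurd hx3 hu
      · exact ⟨hx1, hx3⟩
    · rintro ⟨hx1, hx3⟩
      exact ⟨Or.inr ⟨hx1, fun h => hv (h ▸ hx3)⟩, hx3⟩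

lemma exchange_setPrec {q d : ℕ} {S : Set (QV q d)} {u v : QV q d}
    (huS : u ∉ S) (hvS : v ∈ S) (huv : u.val.length = v.val.length)
    (hlex : List.Lex (· < ·) u.val v.val) :
    QV.SetPrec (insert u (S \ {v})) S := by
  constructor
  · exact exchange_level_ncard huS hvS huv
  · have hxv : u ≠ v := fun h => lex_irrefl u.val (h ▸ hlex)
    refine ⟨u, Or.inl rfl, huS, fun x hx => ?_⟩
    have hxu : x ≠ u := by
      rintro rfl
      rcases hx with hx | ⟨_, hx⟩
      · exact lt_irrefl _ hx
      · exact lex_irrefl _ hx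
    have hxv : x ≠ v := by
      rintro rfl
      rcases hx with hx | ⟨_, hx⟩
      · rw [huv] at hx; exact lt_irrefl _ hx
      · exact lex_asymm hlex hx
    simp only [Set.mem_insert_iff, Set.mem_diff, Set.mem_singleton_iff]
    constructor
    · rintro (rfl | ⟨h1, _⟩)
      · exact absurd rfl hxu
      · exact h1
    · intro h1
      exact Or.inr ⟨h1, hxv⟩


theorem minimal_in_order_is_left_ordered (q d : ℕ) (hq : 2 ≤ q) (hd : 1 ≤ d)
    (S : Set (QV q d)) (h : ∀ U : Set (QV q d), ¬ QV.SetPrec U S) :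
    QV.LeftOrdered S := by
  intro i u v hlen hsw
  obtain ⟨⟨hlv, hlex⟩, hcase⟩ := hsw
  rcases hcase with ⟨huS, hvS⟩ | ⟨huS, hvS, hchu, w, ⟨a, hwa⟩, hwS⟩
  · exact h _ (exchange_setPrec huS hvS hlv hlex)
  · have hwd : w.val.length ≤ d := w.2
    have hud : (u.val ++ [a]).length ≤ d := by
      have := congrArg List.length hwa
      simp at this ⊢
      omega
    set u' : QV q d := ⟨u.val ++ [a], hud⟩ with hu'def
    have hu'S : u' ∉ S := hchu u' ⟨a, rfl⟩
    have hlenuw : u'.val.length = w.val.length := by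
      have := congrArg List.length hwa
      simp [hu'def] at this ⊢
      omega
    have hlexw : List.Lex (· < ·) u'.val w.val := by
      rw [show w.val = v.val ++ [a] from hwa]
      exact lex_append hlv hlex [a] [a]
    exact h _ (exchange_setPrec hu'S hwS hlenuw hlexw)
end
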